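/- arXiv:math/0405191 — 4 statements merged into one kernel-verified Lean document; each statement's English description precedes it below -/
import Mathlib

section
/- A permutation π of [1, n+m] is an (n,m)-annular non-crossing permutation if and only if π satisfies: (connectedness) at least one cycle of π contains elements both from [1,n] and from [n+1,n+m], and (geodesic/planarity condition) #(π) + #(π⁻¹γ) = n + m, where γ = (1,2,...,n)(n+1,...,n+m) and #(σ) denotes the number of cycles of σ. In particular, any π satisfying the geodesic condition together with connectedness has genus zero in the sense that #(π) + #(π⁻¹γ) + #(γ) = (n+m) + 2(1 - g) with g = 0. -/
/-- The number of cycles of a permutation, counting fixed points as cycles of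
length one. -/
def cycleCount {α : Type*} [Fintype α] [DecidableEq α] (σ : Equiv.Perm α) : ℕ :=
  (Fintype.card α - σ.support.card) + σ.cycleType.card

/-- The permutation `γ = γ_{n,m}` of `[1, n+m]` with two cycles
`(1,2,…,n)(n+1,…,n+m)`. -/
def annGamma (n m : ℕ) : Equiv.Perm (Fin (n + m)) :=
  Equiv.permCongr finSumFinEquiv (Equiv.Perm.sumCongr (finRotate n) (finRotate m))

/-- `σ ∨ γ = 1`: the group generated by `σ` and `γ` acts transitively. -/
def JoinTrivial {N : ℕ} (σ γ : Equiv.Perm (Fin N)) : Prop :=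
  ∀ x y : Fin N, y ∈ MulAction.orbit (Subgroup.closure ({σ, γ} : Set (Equiv.Perm (Fin N)))) x

/-- Membership in `S_NC(n,m)`: `σ ∨ γ = 1` and genus zero, i.e.
`#(σ) + #(σ⁻¹γ) + #(γ) = (n+m) + 2·(1 - 0)`. -/
def IsAnnularNCPerm (n m : ℕ) (σ : Equiv.Perm (Fin (n + m))) : Prop :=
  JoinTrivial σ (annGamma n m) ∧
    cycleCount σ + cycleCount (σ⁻¹ * annGamma n m) + cycleCount (annGamma n m) = (n + m) + 2

/-- Connectedness: at least one cycle of `π` contains elements of both `[1,n]`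
and `[n+1,n+m]`. -/
def AnnConnected (n m : ℕ) (π : Equiv.Perm (Fin (n + m))) : Prop :=
  ∃ i j : Fin (n + m), (i : ℕ) < n ∧ n ≤ (j : ℕ) ∧ π.SameCycle i j


open Equiv Equiv.Perm

variable {α β : Type*}

/-- `permCongr` as a monoid hom. -/
def pcHom (e : α ≃ β) : Equiv.Perm α →* Equiv.Perm β where
  toFun := e.permCongr
  map_one' := by ext x; simp
  map_mul' := fun σ τ => by ext x; simp [Equiv.Perm.mul_apply]

lemma pcHom_apply (e : α ≃ β) (σ : Equiv.Perm α) : pcHom e σ = e.permCongr σ := rfl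

lemma support_permCongr [Fintype α] [DecidableEq α] [Fintype β] [DecidableEq β]
    (e : α ≃ β) (σ : Equiv.Perm α) :
    (e.permCongr σ).support = σ.support.map e.toEmbedding := by
  ext b
  simp only [Equiv.Perm.mem_support, Finset.mem_map_equiv, Equiv.permCongr_apply]
  constructor
  · intro h hc; exact h (by rw [hc]; simp)
  · intro h hc; exact h (by simpa using congrArg e.symm hc)

lemma isCycle_permCongr [DecidableEq α] (e : α ≃ β) {σ : Equiv.Perm α} (hσ : σ.IsCycle) :
    (e.permCongr σ).IsCycle := by
  obtain ⟨x, hx, h⟩ := hσ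
  refine ⟨e x, by simpa using fun hc => hx (e.injective hc), ?_⟩
  intro y hy
  have hy' : σ (e.symm y) ≠ e.symm y := by
    intro hc; exact hy (by simpa [Equiv.permCongr_apply] using congrArg e hc)
  obtain ⟨k, hk⟩ := h hy'
  refine ⟨k, ?_⟩
  have : (e.permCongr σ) ^ k = e.permCongr (σ ^ k) := by
    rw [← pcHom_apply, ← pcHom_apply, map_zpow]
  rw [this]
  simp [Equiv.permCongr_apply, hk]

lemma disjoint_permCongr (e : α ≃ β) {σ τ : Equiv.Perm α} (h : Equiv.Perm.Disjoint σ τ) :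
    Equiv.Perm.Disjoint (e.permCongr σ) (e.permCongr τ) := by
  intro b
  rcases h (e.symm b) with h' | h' <;> [left; right] <;>
    simp [Equiv.permCongr_apply, h']

lemma cycleType_permCongr [Fintype α] [DecidableEq α] [Fintype β] [DecidableEq β]
    (e : α ≃ β) (σ : Equiv.Perm α) :
    (e.permCongr σ).cycleType = σ.cycleType := by
  obtain ⟨l, h0, h1, h2⟩ := σ.truncCycleFactors.out
  rw [Equiv.Perm.cycleType_eq l h0 h1 h2,
    Equiv.Perm.cycleType_eq (l.map (e.permCongr ·))
      (by rw [← h0]; exact (map_list_prod (pcHom e) l).symm)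
      (by intro τ hτ
          obtain ⟨c, hc, rfl⟩ := List.mem_map.1 hτ
          exact isCycle_permCongr e (h1 c hc))
      (List.Pairwise.map _ (fun a b hd => disjoint_permCongr e hd) h2)]
  rw [List.map_map]
  congr 1
  exact List.map_congr_left fun c hc => by
    simp [Function.comp_def, support_permCongr]

lemma cycleCount_permCongr [Fintype α] [DecidableEq α] [Fintype β] [DecidableEq β]
    (e : α ≃ β) (σ : Equiv.Perm α) :
    cycleCount (e.permCongr σ) = cycleCount σ := by
  unfold cycleCount
  rw [support_permCongr, Finset.card_map, cycleType_permCongr, Fintype.card_congr e.symm]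

section SumPieces

variable [Fintype α] [DecidableEq α] [Fintype β] [DecidableEq β]

lemma support_sumCongr_left (f : Equiv.Perm α) :
    (Equiv.Perm.sumCongr f (1 : Equiv.Perm β)).support
      = f.support.map ⟨Sum.inl, Sum.inl_injective⟩ := by
  ext x
  cases x <;> simp [Equiv.Perm.mem_support]

lemma support_sumCongr_right (g : Equiv.Perm β) :
    (Equiv.Perm.sumCongr (1 : Equiv.Perm α) g).support
      = g.support.map ⟨Sum.inr, Sum.inr_injective⟩ := by
  ext x
  cases x <;> simp [Equiv.Perm.mem_support]

lemma sumCongr_left_zpow (f : Equiv.Perm α) (k : ℤ) :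
    (Equiv.Perm.sumCongr f (1 : Equiv.Perm β)) ^ k = Equiv.Perm.sumCongr (f ^ k) 1 := by
  have : Equiv.Perm.sumCongr f (1 : Equiv.Perm β) = Equiv.Perm.sumCongrHom α β (f, 1) := rfl
  rw [this, ← map_zpow]
  simp [Equiv.Perm.sumCongrHom]

lemma sumCongr_right_zpow (g : Equiv.Perm β) (k : ℤ) :
    (Equiv.Perm.sumCongr (1 : Equiv.Perm α) g) ^ k = Equiv.Perm.sumCongr 1 (g ^ k) := by
  have : Equiv.Perm.sumCongr (1 : Equiv.Perm α) g = Equiv.Perm.sumCongrHom α β (1, g) := rfl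
  rw [this, ← map_zpow]
  simp [Equiv.Perm.sumCongrHom]

lemma isCycle_sumCongr_left {f : Equiv.Perm α} (hf : f.IsCycle) :
    (Equiv.Perm.sumCongr f (1 : Equiv.Perm β)).IsCycle := by
  obtain ⟨x, hx, h⟩ := hf
  refine ⟨Sum.inl x, by simpa using hx, ?_⟩
  rintro (a | b) hy
  · obtain ⟨k, hk⟩ := h (by simpa using hy)
    exact ⟨k, by rw [sumCongr_left_zpow]; simp [hk]⟩
  · simp at hy

lemma isCycle_sumCongr_right {g : Equiv.Perm β} (hg : g.IsCycle) :
    (Equiv.Perm.sumCongr (1 : Equiv.Perm α) g).IsCycle := by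
  obtain ⟨x, hx, h⟩ := hg
  refine ⟨Sum.inr x, by simpa using hx, ?_⟩
  rintro (a | b) hy
  · simp at hy
  · obtain ⟨k, hk⟩ := h (by simpa using hy)
    exact ⟨k, by rw [sumCongr_right_zpow]; simp [hk]⟩

lemma disjoint_sumCongr (f : Equiv.Perm α) (g : Equiv.Perm β) :
    Equiv.Perm.Disjoint (Equiv.Perm.sumCongr f (1 : Equiv.Perm β))
      (Equiv.Perm.sumCongr (1 : Equiv.Perm α) g) := by
  rintro (a | b)
  · right; simp
  · left; simp

end SumPieces

lemma cycleCount_annGamma {n m : ℕ} (hn : 1 ≤ n) (hm : 1 ≤ m) :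
    cycleCount (annGamma n m) = 2 := by
  classical
  set e := (finSumFinEquiv : Fin n ⊕ Fin m ≃ Fin (n + m))
  set ρ : Equiv.Perm (Fin n ⊕ Fin m) :=
    Equiv.Perm.sumCongr (finRotate n) (finRotate m) with hρ
  have hγ : annGamma n m = e.permCongr ρ := rfl
  have hρsplit : ρ = Equiv.Perm.sumCongr (finRotate n) (1 : Equiv.Perm (Fin m)) *
      Equiv.Perm.sumCongr (1 : Equiv.Perm (Fin n)) (finRotate m) := by
    rw [Equiv.Perm.sumCongr_mul, mul_one, one_mul]
  set A := Equiv.Perm.sumCongr (finRotate n) (1 : Equiv.Perm (Fin m))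
  set B := Equiv.Perm.sumCongr (1 : Equiv.Perm (Fin n)) (finRotate m)
  have hd : A.Disjoint B := disjoint_sumCongr _ _
  rw [hγ, cycleCount_permCongr]
  unfold cycleCount
  rw [hρsplit, hd.card_support_mul, hd.cycleType_mul]
  have hcard : Fintype.card (Fin n ⊕ Fin m) = n + m := by simp
  have hAdata : A.support.card = (if n = 1 then 0 else n) ∧
      Multiset.card A.cycleType = (if n = 1 then 0 else 1) := by
    rcases Nat.lt_or_ge n 2 with h2 | h2
    · have : n = 1 := by omega
      subst this
      have : A = 1 := by
        have : finRotate 1 = (1 : Equiv.Perm (Fin 1)) := Subsingleton.elim _ _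
        simp only [A, this, Equiv.Perm.sumCongr_one]
      simp [this]
    · have hc : A.IsCycle := isCycle_sumCongr_left (isCycle_finRotate_of_le h2)
      have hs : A.support.card = n := by
        rw [support_sumCongr_left, Finset.card_map,
          support_finRotate_of_le h2, Finset.card_univ, Fintype.card_fin]
      rw [hc.cycleType, hs]
      have : n ≠ 1 := by omega
      simp [this]
  have hBdata : B.support.card = (if m = 1 then 0 else m) ∧
      Multiset.card B.cycleType = (if m = 1 then 0 else 1) := by
    rcases Nat.lt_or_ge m 2 with h2 | h2
    · have : m = 1 := by omega
      subst this
      have : B = 1 := by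
        have : finRotate 1 = (1 : Equiv.Perm (Fin 1)) := Subsingleton.elim _ _
        simp only [B, this, Equiv.Perm.sumCongr_one]
      simp [this]
    · have hc : B.IsCycle := isCycle_sumCongr_right (isCycle_finRotate_of_le h2)
      have hs : B.support.card = m := by
        rw [support_sumCongr_right, Finset.card_map,
          support_finRotate_of_le h2, Finset.card_univ, Fintype.card_fin]
      rw [hc.cycleType, hs]
      have : m ≠ 1 := by omega
      simp [this]
  rw [hcard, Multiset.card_add, hAdata.1, hAdata.2, hBdata.1, hBdata.2]
  rcases eq_or_ne n 1 with h | h <;> rcases eq_or_ne m 1 with h' | h' <;>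
    simp [h, h'] <;> omega

open Fin.NatCast Fin.CommRing in
lemma finRotate_pow_apply {n : ℕ} (k : ℕ) (a : Fin (n + 1)) :
    (finRotate (n + 1) ^ k) a = a + (k : Fin (n + 1)) := by
  induction k with
  | zero => simp
  | succ k ih =>
    rw [pow_succ', Equiv.Perm.mul_apply, finRotate_succ_apply, Nat.cast_add, Nat.cast_one]
    rw [ih]
    ring

open Fin.NatCast Fin.CommRing in
lemma finRotate_reach {n : ℕ} (hn : 1 ≤ n) (a b : Fin n) :
    ∃ k : ℕ, (finRotate n ^ k) a = b := by
  match n, hn with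
  | (n' + 1), _ =>
  refine ⟨(b - a : Fin (n' + 1)).val, ?_⟩
  rw [finRotate_pow_apply, Fin.cast_val_eq_self]
  ring

lemma annGamma_pow_left {n m : ℕ} (k : ℕ) (a : Fin n) :
    ((annGamma n m) ^ k) (finSumFinEquiv (Sum.inl a))
      = finSumFinEquiv (Sum.inl ((finRotate n ^ k) a)) := by
  have h1 : (annGamma n m) ^ k
      = finSumFinEquiv.permCongr ((Equiv.Perm.sumCongr (finRotate n) (finRotate m)) ^ k) := by
    rw [show annGamma n m = pcHom finSumFinEquiv (Equiv.Perm.sumCongr (finRotate n) (finRotate m)) from rfl,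
      ← map_pow]
    rfl
  have h2 : (Equiv.Perm.sumCongr (finRotate n) (finRotate m)) ^ k
      = Equiv.Perm.sumCongr (finRotate n ^ k) (finRotate m ^ k) := by
    have : Equiv.Perm.sumCongr (finRotate n) (finRotate m)
        = Equiv.Perm.sumCongrHom _ _ (finRotate n, finRotate m) := rfl
    rw [this, ← map_pow]
    rfl
  rw [h1, h2]
  simp

lemma annGamma_pow_right {n m : ℕ} (k : ℕ) (b : Fin m) :
    ((annGamma n m) ^ k) (finSumFinEquiv (Sum.inr b))
      = finSumFinEquiv (Sum.inr ((finRotate m ^ k) b)) := by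
  have h1 : (annGamma n m) ^ k
      = finSumFinEquiv.permCongr ((Equiv.Perm.sumCongr (finRotate n) (finRotate m)) ^ k) := by
    rw [show annGamma n m = pcHom finSumFinEquiv (Equiv.Perm.sumCongr (finRotate n) (finRotate m)) from rfl,
      ← map_pow]
    rfl
  have h2 : (Equiv.Perm.sumCongr (finRotate n) (finRotate m)) ^ k
      = Equiv.Perm.sumCongr (finRotate n ^ k) (finRotate m ^ k) := by
    have : Equiv.Perm.sumCongr (finRotate n) (finRotate m)
        = Equiv.Perm.sumCongrHom _ _ (finRotate n, finRotate m) := rfl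
    rw [this, ← map_pow]
    rfl
  rw [h1, h2]
  simp

/-- `γ` reaches any element of the left block from any other. -/
lemma annGamma_reach_left {n m : ℕ} (hn : 1 ≤ n) (x y : Fin (n + m))
    (hx : (x : ℕ) < n) (hy : (y : ℕ) < n) :
    ∃ k : ℕ, ((annGamma n m) ^ k) x = y := by
  set a : Fin n := ⟨x, hx⟩
  set b : Fin n := ⟨y, hy⟩
  have hxa : x = finSumFinEquiv (Sum.inl a) := by
    apply Fin.ext; simp [a]
  have hyb : y = finSumFinEquiv (Sum.inl b) := by
    apply Fin.ext; simp [b]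
  obtain ⟨k, hk⟩ := finRotate_reach hn a b
  exact ⟨k, by rw [hxa, annGamma_pow_left, hk, ← hyb]⟩

lemma annGamma_reach_right {n m : ℕ} (hm : 1 ≤ m) (x y : Fin (n + m))
    (hx : n ≤ (x : ℕ)) (hy : n ≤ (y : ℕ)) :
    ∃ k : ℕ, ((annGamma n m) ^ k) x = y := by
  set a : Fin m := ⟨(x : ℕ) - n, by omega⟩
  set b : Fin m := ⟨(y : ℕ) - n, by omega⟩
  have hxa : x = finSumFinEquiv (Sum.inr a) := by
    apply Fin.ext; simp [a]; omega
  have hyb : y = finSumFinEquiv (Sum.inr b) := by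
    apply Fin.ext; simp [b]; omega
  obtain ⟨k, hk⟩ := finRotate_reach hm a b
  exact ⟨k, by rw [hxa, annGamma_pow_right, hk, ← hyb]⟩

/-- `γ` preserves the two blocks. -/
lemma annGamma_lt_iff {n m : ℕ} (x : Fin (n + m)) :
    ((annGamma n m x : ℕ) < n) ↔ (x : ℕ) < n := by
  rcases h : finSumFinEquiv.symm x with a | b
  · have hx : x = finSumFinEquiv (Sum.inl a) := by
      rw [← h]; simp
    have : annGamma n m x = finSumFinEquiv (Sum.inl (finRotate n a)) := by
      rw [hx]; simp [annGamma]
    rw [this, hx]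
    simp [Fin.is_lt]
  · have hx : x = finSumFinEquiv (Sum.inr b) := by
      rw [← h]; simp
    have : annGamma n m x = finSumFinEquiv (Sum.inr (finRotate m b)) := by
      rw [hx]; simp [annGamma]
    rw [this, hx]
    simp

lemma joinTrivial_of_annConnected {n m : ℕ} (hn : 1 ≤ n) (hm : 1 ≤ m)
    (π : Equiv.Perm (Fin (n + m))) (h : AnnConnected n m π) :
    JoinTrivial π (annGamma n m) := by
  classical
  obtain ⟨i, j, hi, hj, hcyc⟩ := h
  set γ := annGamma n m
  set H := Subgroup.closure ({π, γ} : Set (Equiv.Perm (Fin (n + m))))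
  have hπH : π ∈ H := Subgroup.subset_closure (by simp)
  have hγH : γ ∈ H := Subgroup.subset_closure (by simp)
  -- every element is in the orbit of i
  have key : ∀ z : Fin (n + m), z ∈ MulAction.orbit H i := by
    intro z
    rcases Nat.lt_or_ge (z : ℕ) n with hz | hz
    · obtain ⟨k, hk⟩ := annGamma_reach_left hn i z hi hz
      exact ⟨⟨γ ^ k, Subgroup.pow_mem _ hγH k⟩, hk⟩
    · obtain ⟨l, hl⟩ := hcyc
      obtain ⟨k, hk⟩ := annGamma_reach_right hm j z hj hz
      refine ⟨⟨γ ^ k * π ^ l, Subgroup.mul_mem _ (Subgroup.pow_mem _ hγH k)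
        (Subgroup.zpow_mem _ hπH l)⟩, ?_⟩
      show (γ ^ k * π ^ l) i = z
      rw [Equiv.Perm.mul_apply, hl, hk]
  intro x y
  have hx := key x
  have hy := key y
  show y ∈ MulAction.orbit (↥H) x
  rw [MulAction.orbit_eq_iff.mpr hx]
  exact hy

lemma annConnected_of_joinTrivial {n m : ℕ} (hn : 1 ≤ n) (hm : 1 ≤ m)
    (π : Equiv.Perm (Fin (n + m))) (h : JoinTrivial π (annGamma n m)) :
    AnnConnected n m π := by
  classical
  by_contra hc
  unfold AnnConnected at hc
  push_neg at hc
  -- π preserves the blocks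
  have hπ : ∀ x : Fin (n + m), ((π x : ℕ) < n) ↔ (x : ℕ) < n := by
    intro x
    constructor
    · intro hpx
      by_contra hx
      exact hc (π x) x hpx (by omega) (Equiv.Perm.sameCycle_apply_right.mpr (Equiv.Perm.SameCycle.refl π x)).symm
    · intro hx
      by_contra hpx
      exact hc x (π x) hx (by omega) (Equiv.Perm.sameCycle_apply_right.mpr (Equiv.Perm.SameCycle.refl π x))
  have key : ∀ g ∈ Subgroup.closure ({π, annGamma n m} : Set (Equiv.Perm (Fin (n + m)))),
      ∀ x : Fin (n + m), ((g x : ℕ) < n) ↔ (x : ℕ) < n := by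
    intro g hg
    induction hg using Subgroup.closure_induction with
    | mem g hg =>
      rcases hg with rfl | hg
      · exact hπ
      · simp only [Set.mem_singleton_iff] at hg
        subst hg
        exact fun x => annGamma_lt_iff x
    | one => simp
    | mul g₁ g₂ _ _ h1 h2 =>
      intro x
      rw [Equiv.Perm.mul_apply, h1, h2]
    | inv g _ h1 =>
      intro x
      have := h1 (g⁻¹ x)
      simpa using this.symm
  -- contradiction with transitivity
  have hx0 : ((⟨0, by omega⟩ : Fin (n + m)) : ℕ) < n := by show 0 < n; omega
  obtain ⟨⟨g, hg⟩, hgy⟩ := h ⟨0, by omega⟩ ⟨n, by omega⟩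
  have : (g (⟨0, by omega⟩ : Fin (n + m)) : ℕ) < n := (key g hg _).mpr hx0
  have hval : g (⟨0, by omega⟩ : Fin (n + m)) = ⟨n, by omega⟩ := hgy
  rw [hval] at this
  simp at this


/-- a permutation `π` of `[1,n+m]` is an `(n,m)`-annular non-crossing
permutation if and only if it is connected and satisfies the geodesic condition
`#(π) + #(π⁻¹γ) = n + m`. -/
theorem annular_noncrossing_iff_connected_geodesic (n m : ℕ) (hn : 1 ≤ n) (hm : 1 ≤ m)
    (π : Equiv.Perm (Fin (n + m))) :
    IsAnnularNCPerm n m π ↔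
      (AnnConnected n m π ∧
        cycleCount π + cycleCount (π⁻¹ * annGamma n m) = n + m) := by
  unfold IsAnnularNCPerm
  rw [cycleCount_annGamma hn hm]
  constructor
  · rintro ⟨hJ, hcnt⟩
    exact ⟨annConnected_of_joinTrivial hn hm π hJ, by omega⟩
  · rintro ⟨hC, hcnt⟩
    exact ⟨joinTrivial_of_annConnected hn hm π hC, by omega⟩
end

section
/- The map a ↦ c(aΩ) from the algebra A(H_R) generated by the operators ω(f) into the cyclic Fock space is tracial: for all a, b ∈ A(H_R), c(abΩ) = c(baΩ). -/
noncomputable def creOp {H : Type*} [NormedAddCommGroup H] [InnerProductSpace ℂ H] (f : H) :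
    Module.End ℂ (TensorAlgebra ℂ H) :=
  LinearMap.mulLeft ℂ (TensorAlgebra.ι ℂ f)

noncomputable def omegaOp {H : Type*} [NormedAddCommGroup H] [InnerProductSpace ℂ H]
    (conj : H → H) (ann : H → Module.End ℂ (TensorAlgebra ℂ H)) (f : H) :
    Module.End ℂ (TensorAlgebra ℂ H) :=
  creOp f + ann (conj f)

namespace CyclicTracial

lemma getLast_eq_of_concat {α : Type*} {l L : List α} {e : α} (h : l ≠ [])
    (hl : l = L ++ [e]) : l.getLast h = e := by
  subst hl; exact List.getLast_concat

variable {H : Type*} [NormedAddCommGroup H] [InnerProductSpace ℂ H]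

/-- Pure tensor associated to a list. -/
noncomputable def Pl (M : List H) : TensorAlgebra ℂ H :=
  (M.map (TensorAlgebra.ι ℂ)).prod

lemma Pl_nil : Pl ([] : List H) = 1 := rfl

lemma Pl_cons (m : H) (M : List H) : Pl (m :: M) = TensorAlgebra.ι ℂ m * Pl M := by
  simp [Pl]

lemma Pl_append (M N : List H) : Pl (M ++ N) = Pl M * Pl N := by
  simp [Pl]

lemma Pl_singleton (m : H) : Pl [m] = TensorAlgebra.ι ℂ m := by
  simp [Pl]

/-- Reversal anti-automorphism of the tensor algebra, as a linear map. -/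
noncomputable def revA : TensorAlgebra ℂ H →ₗ[ℂ] TensorAlgebra ℂ H :=
  (MulOpposite.opLinearEquiv ℂ).symm.toLinearMap ∘ₗ
    (TensorAlgebra.lift ℂ
      ((MulOpposite.opLinearEquiv ℂ).toLinearMap ∘ₗ TensorAlgebra.ι ℂ)).toLinearMap

@[simp] lemma revA_one : revA (1 : TensorAlgebra ℂ H) = 1 := by
  simp [revA]

lemma revA_ι_mul (f : H) (x : TensorAlgebra ℂ H) :
    revA (TensorAlgebra.ι ℂ f * x) = revA x * TensorAlgebra.ι ℂ f := by
  simp [revA, map_mul, TensorAlgebra.lift_ι_apply]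

lemma revA_Pl (M : List H) : revA (Pl M) = Pl M.reverse := by
  induction M with
  | nil => simp [Pl_nil]
  | cons m M ih =>
      rw [Pl_cons, revA_ι_mul, ih, List.reverse_cons, Pl_append, Pl_singleton]

/-- Pure tensors span the tensor algebra. -/
lemma span_Pl : Submodule.span ℂ (Set.range (Pl (H := H))) = ⊤ := by
  rw [Submodule.eq_top_iff']
  intro x
  induction x using TensorAlgebra.induction with
  | algebraMap r =>
      have : (algebraMap ℂ (TensorAlgebra ℂ H)) r = r • Pl ([] : List H) := by
        simp [Pl_nil, Algebra.algebraMap_eq_smul_one]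
      rw [this]
      exact Submodule.smul_mem _ _ (Submodule.subset_span ⟨[], rfl⟩)
  | ι f =>
      have : TensorAlgebra.ι ℂ f = Pl [f] := (Pl_singleton f).symm
      rw [this]
      exact Submodule.subset_span ⟨[f], rfl⟩
  | add a b ha hb => exact Submodule.add_mem _ ha hb
  | mul a b ha hb =>
      induction ha using Submodule.span_induction with
      | mem x hx =>
          induction hb using Submodule.span_induction with
          | mem y hy =>
              obtain ⟨M, rfl⟩ := hx
              obtain ⟨N, rfl⟩ := hy
              exact Submodule.subset_span ⟨M ++ N, Pl_append M N⟩
          | zero => simp only [mul_zero]; exact Submodule.zero_mem _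
          | add y z _ _ hy hz => rw [mul_add]; exact Submodule.add_mem _ hy hz
          | smul a y _ hy => rw [mul_smul_comm]; exact Submodule.smul_mem _ _ hy
      | zero => simp only [zero_mul]; exact Submodule.zero_mem _
      | add x y _ _ hx hy => rw [add_mul]; exact Submodule.add_mem _ hx hy
      | smul a x _ hx => rw [smul_mul_assoc]; exact Submodule.smul_mem _ _ hx

lemma ext_Pl {W : Type*} [AddCommGroup W] [Module ℂ W]
    {T₁ T₂ : TensorAlgebra ℂ H →ₗ[ℂ] W}
    (h : ∀ M : List H, T₁ (Pl M) = T₂ (Pl M)) : T₁ = T₂ := by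
  apply LinearMap.ext_on (span_Pl (H := H))
  rintro x ⟨M, rfl⟩
  exact h M

section ops

variable (conj : H → H) (ann : H → Module.End ℂ (TensorAlgebra ℂ H))

/-- right annihilation operator. -/
noncomputable def annR (g : H) : Module.End ℂ (TensorAlgebra ℂ H) :=
  revA ∘ₗ (ann g) ∘ₗ revA

/-- right semicircular operator. -/
noncomputable def omegaR (f : H) : Module.End ℂ (TensorAlgebra ℂ H) :=
  LinearMap.mulRight ℂ (TensorAlgebra.ι ℂ f) + annR ann (conj f)

variable (hann0 : ∀ g, ann g 1 = 0)
variable (hann : ∀ g f₁ (x : TensorAlgebra ℂ H),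
      ann g (TensorAlgebra.ι ℂ f₁ * x) = (inner ℂ g f₁ : ℂ) • x)

include hann0 in
lemma annR_one (g : H) : annR ann g 1 = 0 := by
  simp [annR, hann0]

include hann in
lemma annR_concat (g e : H) (M : List H) :
    annR ann g (Pl (M ++ [e])) = (inner ℂ g e : ℂ) • Pl M := by
  have h1 : revA (Pl (M ++ [e])) = TensorAlgebra.ι ℂ e * Pl M.reverse := by
    rw [revA_Pl, List.reverse_append, List.reverse_singleton, List.singleton_append, Pl_cons]
  simp only [annR, LinearMap.coe_comp, Function.comp_apply, h1, hann, map_smul, revA_Pl,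
    List.reverse_reverse]

include hann0 in
lemma omegaR_one (f : H) : omegaR conj ann f 1 = TensorAlgebra.ι ℂ f := by
  simp [omegaR, annR_one ann hann0, LinearMap.mulRight_apply]

include hann in
lemma omegaR_concat (f e : H) (M : List H) :
    omegaR conj ann f (Pl (M ++ [e])) =
      Pl (M ++ [e] ++ [f]) + (inner ℂ (conj f) e : ℂ) • Pl M := by
  rw [omegaR, LinearMap.add_apply, LinearMap.mulRight_apply, annR_concat ann hann,
    Pl_append (M ++ [e]) [f], Pl_singleton]

include hann0 in
lemma omegaOp_one (f : H) : omegaOp conj ann f 1 = TensorAlgebra.ι ℂ f := by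
  simp [omegaOp, creOp, hann0, LinearMap.mulLeft_apply]

include hann in
lemma omegaOp_cons (f m : H) (M : List H) :
    omegaOp conj ann f (Pl (m :: M)) =
      Pl (f :: m :: M) + (inner ℂ (conj f) m : ℂ) • Pl M := by
  simp only [omegaOp, creOp, LinearMap.add_apply, LinearMap.mulLeft_apply, Pl_cons, hann,
    mul_assoc]

variable (hsym : ∀ f g : H, (inner ℂ (conj f) g : ℂ) = (inner ℂ (conj g) f : ℂ))

include hann0 hann hsym in
lemma commLR (f g : H) :
    omegaOp conj ann g * omegaR conj ann f = omegaR conj ann f * omegaOp conj ann g := by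
  apply ext_Pl
  intro M
  rw [Module.End.mul_apply, Module.End.mul_apply]
  rcases M with _ | ⟨m, M'⟩
  · -- M = []
    rw [Pl_nil, omegaR_one conj ann hann0, omegaOp_one conj ann hann0]
    have h1 : omegaOp conj ann g (TensorAlgebra.ι ℂ f)
        = Pl [g, f] + (inner ℂ (conj g) f : ℂ) • Pl [] := by
      have h := omegaOp_cons conj ann hann g f []
      rwa [Pl_singleton] at h
    have h2 : omegaR conj ann f (TensorAlgebra.ι ℂ g)
        = Pl [g, f] + (inner ℂ (conj f) g : ℂ) • Pl [] := by
      have h := omegaR_concat conj ann hann f g []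
      simp only [List.nil_append, List.cons_append] at h
      rwa [Pl_singleton] at h
    rw [h1, h2, hsym g f]
  · rcases List.eq_nil_or_concat M' with rfl | ⟨N, e, rfl⟩
    · -- M = [m]
      have hRm : omegaR conj ann f (Pl [m]) = Pl [m, f] + (inner ℂ (conj f) m : ℂ) • Pl [] := by
        have h := omegaR_concat conj ann hann f m []
        simpa only [List.nil_append, List.cons_append] using h
      have hLm : omegaOp conj ann g (Pl [m]) = Pl [g, m] + (inner ℂ (conj g) m : ℂ) • Pl [] :=
        omegaOp_cons conj ann hann g m []
      have hLmf : omegaOp conj ann g (Pl [m, f])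
          = Pl [g, m, f] + (inner ℂ (conj g) m : ℂ) • Pl [f] :=
        omegaOp_cons conj ann hann g m [f]
      have hRgm : omegaR conj ann f (Pl [g, m])
          = Pl [g, m, f] + (inner ℂ (conj f) m : ℂ) • Pl [g] := by
        have h := omegaR_concat conj ann hann f m [g]
        simpa only [List.nil_append, List.cons_append] using h
      rw [hRm, map_add, map_smul, hLmf, hLm, map_add, map_smul, hRgm]
      rw [Pl_nil, omegaOp_one conj ann hann0, omegaR_one conj ann hann0,
        ← Pl_singleton g, ← Pl_singleton f]
      abel
    · -- M = m :: (N ++ [e])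
      rw [List.concat_eq_append]
      have h1 : omegaR conj ann f (Pl (m :: (N ++ [e])))
          = Pl (m :: (N ++ e :: [f])) + (inner ℂ (conj f) e : ℂ) • Pl (m :: N) := by
        have h := omegaR_concat conj ann hann f e (m :: N)
        simpa only [List.append_assoc, List.cons_append, List.nil_append] using h
      have h2 : omegaOp conj ann g (Pl (m :: (N ++ e :: [f])))
          = Pl (g :: m :: (N ++ e :: [f])) + (inner ℂ (conj g) m : ℂ) • Pl (N ++ e :: [f]) :=
        omegaOp_cons conj ann hann g m (N ++ e :: [f])
      have h3 : omegaOp conj ann g (Pl (m :: N))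
          = Pl (g :: m :: N) + (inner ℂ (conj g) m : ℂ) • Pl N :=
        omegaOp_cons conj ann hann g m N
      have h4 : omegaOp conj ann g (Pl (m :: (N ++ [e])))
          = Pl (g :: m :: (N ++ [e])) + (inner ℂ (conj g) m : ℂ) • Pl (N ++ [e]) :=
        omegaOp_cons conj ann hann g m (N ++ [e])
      have h5 : omegaR conj ann f (Pl (g :: m :: (N ++ [e])))
          = Pl (g :: m :: (N ++ e :: [f])) + (inner ℂ (conj f) e : ℂ) • Pl (g :: m :: N) := by
        have h := omegaR_concat conj ann hann f e (g :: m :: N)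
        simpa only [List.append_assoc, List.cons_append, List.nil_append] using h
      have h6 : omegaR conj ann f (Pl (N ++ [e]))
          = Pl (N ++ e :: [f]) + (inner ℂ (conj f) e : ℂ) • Pl N := by
        have h := omegaR_concat conj ann hann f e N
        simpa only [List.append_assoc, List.cons_append, List.nil_append] using h
      rw [h1, map_add, map_smul, h2, h3, h4, map_add, map_smul, h5, h6]
      simp only [smul_add, smul_smul]
      rw [mul_comm ((inner ℂ (conj f) e : ℂ)) ((inner ℂ (conj g) m : ℂ))]
      abel

end ops

end CyclicTracial

open CyclicTracial in
/-- the map `a ↦ c(aΩ)` from the algebra `A(H_ℝ)` generated by the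
semicircular operators `ω(f)` into the cyclic Fock space is tracial:
`c(abΩ) = c(baΩ)` for all `a, b ∈ A(H_ℝ)`.  Here the linear Fock space is the
tensor algebra, `V` is the cyclic Fock space with circular tensors `cycT`
(invariant under cyclic rotation), and `c` is defined by `cΩ = 0` and
`c(f₁⊗⋯⊗fₙ) = [f₁⊗⋯⊗fₙ] + ⟨f₁, f̄ₙ⟩ c(f₂⊗⋯⊗f_{n-1})`. -/
theorem cyclic_map_tracial_semicircular {H : Type*} [NormedAddCommGroup H]
    [InnerProductSpace ℂ H]
    (conj : H → H) (ann : H → Module.End ℂ (TensorAlgebra ℂ H))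
    (hann0 : ∀ g, ann g 1 = 0)
    (hann : ∀ g f₁ (x : TensorAlgebra ℂ H),
      ann g (TensorAlgebra.ι ℂ f₁ * x) = (inner ℂ g f₁ : ℂ) • x)
    (hsym : ∀ f g : H, (inner ℂ (conj f) g : ℂ) = (inner ℂ (conj g) f : ℂ))
    (hsep : ∀ T ∈ Algebra.adjoin ℂ (Set.range (omegaOp conj ann)),
      T 1 = 0 → T = 0)
    (V : Type*) [AddCommGroup V] [Module ℂ V]
    (cycT : List H → V)
    (hcycrot : ∀ (f : H) (fs : List H), cycT (fs ++ [f]) = cycT (f :: fs))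
    (c : TensorAlgebra ℂ H →ₗ[ℂ] V)
    (hc0 : c 1 = 0)
    (hcrec : ∀ (f : H) (fs : List H),
      c (((f :: fs).map (TensorAlgebra.ι ℂ)).prod) =
        cycT (f :: fs) +
          (inner ℂ (conj ((f :: fs).getLast (List.cons_ne_nil f fs))) f : ℂ) •
            c ((fs.dropLast.map (TensorAlgebra.ι ℂ)).prod)) :
    ∀ a ∈ Algebra.adjoin ℂ (Set.range (omegaOp conj ann)),
      ∀ b ∈ Algebra.adjoin ℂ (Set.range (omegaOp conj ann)),
        c ((a * b) 1) = c ((b * a) 1) := by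
  classical
  -- restate hcrec in terms of Pl
  have hcrec' : ∀ (f : H) (fs : List H),
      c (Pl (f :: fs)) = cycT (f :: fs) +
        (inner ℂ (conj ((f :: fs).getLast (List.cons_ne_nil f fs))) f : ℂ) •
          c (Pl fs.dropLast) := hcrec
  -- key lemma on pure tensors
  have key : ∀ (f : H) (M : List H),
      c (omegaOp conj ann f (Pl M)) = c (omegaR conj ann f (Pl M)) := by
    intro f M
    rcases M with _ | ⟨m, M'⟩
    · rw [Pl_nil, omegaOp_one conj ann hann0, omegaR_one conj ann hann0]
    · rcases List.eq_nil_or_concat M' with rfl | ⟨N, e, rfl⟩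
      · -- M = [m]
        have hA : omegaOp conj ann f (Pl [m])
            = Pl [f, m] + (inner ℂ (conj f) m : ℂ) • Pl [] :=
          omegaOp_cons conj ann hann f m []
        have hB : omegaR conj ann f (Pl [m])
            = Pl [m, f] + (inner ℂ (conj f) m : ℂ) • Pl [] := by
          have h := omegaR_concat conj ann hann f m []
          simpa only [List.nil_append, List.cons_append] using h
        have hc1 := hcrec' f [m]
        rw [show (f :: [m]).getLast (List.cons_ne_nil f [m]) = m from rfl,
          show ([m] : List H).dropLast = [] from rfl] at hc1
        have hc2 := hcrec' m [f]
        rw [show (m :: [f]).getLast (List.cons_ne_nil m [f]) = f from rfl,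
          show ([f] : List H).dropLast = [] from rfl] at hc2
        have hrot := hcycrot f [m]
        simp only [List.cons_append, List.nil_append] at hrot
        rw [hA, hB, map_add, map_add]
        simp only [map_smul]
        rw [hc1, hc2, hrot, hsym m f]
      · -- M = m :: (N ++ [e])
        rw [List.concat_eq_append]
        have hA : omegaOp conj ann f (Pl (m :: (N ++ [e])))
            = Pl (f :: m :: (N ++ [e])) + (inner ℂ (conj f) m : ℂ) • Pl (N ++ [e]) :=
          omegaOp_cons conj ann hann f m (N ++ [e])
        have hB : omegaR conj ann f (Pl (m :: (N ++ [e])))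
            = Pl (m :: (N ++ e :: [f])) + (inner ℂ (conj f) e : ℂ) • Pl (m :: N) := by
          have h := omegaR_concat conj ann hann f e (m :: N)
          simpa only [List.append_assoc, List.cons_append, List.nil_append] using h
        have hc1 := hcrec' f (m :: (N ++ [e]))
        rw [getLast_eq_of_concat (List.cons_ne_nil _ _)
            (show f :: m :: (N ++ [e]) = (f :: m :: N) ++ [e] by simp),
          show (m :: (N ++ [e])).dropLast = m :: N by
            rw [show m :: (N ++ [e]) = (m :: N) ++ [e] by simp, List.dropLast_concat]] at hc1
        have hc2 := hcrec' m (N ++ e :: [f])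
        rw [getLast_eq_of_concat (List.cons_ne_nil _ _)
            (show m :: (N ++ e :: [f]) = (m :: (N ++ [e])) ++ [f] by simp),
          show (N ++ e :: [f]).dropLast = N ++ [e] by
            rw [show N ++ e :: [f] = (N ++ [e]) ++ [f] by simp, List.dropLast_concat]] at hc2
        have hrot := hcycrot f (m :: (N ++ [e]))
        simp only [List.append_assoc, List.cons_append, List.nil_append] at hrot
        rw [hA, hB, map_add, map_add]
        simp only [map_smul]
        rw [hc1, hc2, hrot, hsym e f]
        abel
  -- extend key lemma by linearity
  have key' : ∀ (f : H) (x : TensorAlgebra ℂ H),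
      c (omegaOp conj ann f x) = c (omegaR conj ann f x) := by
    intro f x
    have h : c ∘ₗ omegaOp conj ann f = c ∘ₗ omegaR conj ann f :=
      ext_Pl (fun M => key f M)
    exact DFunLike.congr_fun h x
  -- words
  let Wl : List H → Module.End ℂ (TensorAlgebra ℂ H) :=
    fun L => (L.map (omegaOp conj ann)).prod
  have Wl_nil : Wl [] = 1 := rfl
  have Wl_cons : ∀ g L, Wl (g :: L) = omegaOp conj ann g * Wl L := by
    intro g L; simp [Wl]
  have Wl_append : ∀ L₁ L₂, Wl (L₁ ++ L₂) = Wl L₁ * Wl L₂ := by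
    intro L₁ L₂; simp [Wl]
  have Wl_comm : ∀ (f : H) (L : List H),
      omegaR conj ann f * Wl L = Wl L * omegaR conj ann f := by
    intro f L
    induction L with
    | nil => rw [Wl_nil, one_mul, mul_one]
    | cons g L ih =>
        rw [Wl_cons, ← mul_assoc, ← commLR conj ann hann0 hann hsym f g,
          mul_assoc, ih, ← mul_assoc]
  -- rotation invariance
  have rot : ∀ (f : H) (L : List H), c (Wl (L ++ [f]) 1) = c (Wl (f :: L) 1) := by
    intro f L
    have hL : Wl (f :: L) 1 = omegaOp conj ann f (Wl L 1) := by
      rw [Wl_cons]; rfl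
    have hR : Wl (L ++ [f]) 1 = Wl L (TensorAlgebra.ι ℂ f) := by
      rw [Wl_append, Wl_cons, Wl_nil, mul_one, Module.End.mul_apply,
        omegaOp_one conj ann hann0]
    rw [hL, hR, key' f (Wl L 1)]
    have h2 : omegaR conj ann f (Wl L 1) = Wl L (omegaR conj ann f 1) := by
      have h3 := DFunLike.congr_fun (Wl_comm f L) (1 : TensorAlgebra ℂ H)
      simpa only [Module.End.mul_apply] using h3
    rw [h2, omegaR_one conj ann hann0]
  -- trace property for words
  have traceW : ∀ (L₁ L₂ : List H), c (Wl (L₁ ++ L₂) 1) = c (Wl (L₂ ++ L₁) 1) := by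
    intro L₁
    induction L₁ with
    | nil => intro L₂; rw [List.nil_append, List.append_nil]
    | cons f L ih =>
        intro L₂
        have e1 : (f :: L) ++ L₂ = f :: (L ++ L₂) := rfl
        have e2 : L₂ ++ (f :: L) = (L₂ ++ [f]) ++ L := by
          rw [List.append_assoc, List.singleton_append]
        rw [e1, ← rot f (L ++ L₂), List.append_assoc, ih (L₂ ++ [f]), e2]
  -- elements of the monoid closure are words
  have list_word : ∀ l : List (Module.End ℂ (TensorAlgebra ℂ H)),
      (∀ y ∈ l, y ∈ Set.range (omegaOp conj ann)) → ∃ L : List H, l.prod = Wl L := by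
    intro l
    induction l with
    | nil => exact fun _ => ⟨[], rfl⟩
    | cons y l ih =>
        intro hl
        obtain ⟨L, hL⟩ := ih (fun z hz => hl z (List.mem_cons_of_mem _ hz))
        obtain ⟨f, hf⟩ := hl y List.mem_cons_self
        exact ⟨f :: L, by rw [List.prod_cons, hL, ← hf, Wl_cons]⟩
  have closure_word : ∀ x ∈ Submonoid.closure (Set.range (omegaOp conj ann)),
      ∃ L : List H, x = Wl L := by
    intro x hx
    obtain ⟨l, hl, rfl⟩ := Submonoid.exists_list_of_mem_closure hx
    exact list_word l hl
  -- main statement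
  intro a ha b hb
  have ha' : a ∈ Submodule.span ℂ
      ((Submonoid.closure (Set.range (omegaOp conj ann)) : Submonoid _) : Set _) := by
    rw [← Algebra.adjoin_eq_span]
    exact ha
  have hb' : b ∈ Submodule.span ℂ
      ((Submonoid.closure (Set.range (omegaOp conj ann)) : Submonoid _) : Set _) := by
    rw [← Algebra.adjoin_eq_span]
    exact hb
  clear ha hb hsep
  have base : ∀ x ∈ Submonoid.closure (Set.range (omegaOp conj ann)),
      ∀ y ∈ Submonoid.closure (Set.range (omegaOp conj ann)),
      c ((x * y) 1) = c ((y * x) 1) := by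
    intro x hx y hy
    obtain ⟨L₁, rfl⟩ := closure_word x hx
    obtain ⟨L₂, rfl⟩ := closure_word y hy
    rw [← Wl_append, ← Wl_append]
    exact traceW L₁ L₂
  have step1 : ∀ x ∈ Submonoid.closure (Set.range (omegaOp conj ann)),
      c ((x * b) 1) = c ((b * x) 1) := by
    intro x hx
    induction hb' using Submodule.span_induction with
    | mem y hy => exact base x hx y hy
    | zero => simp
    | add y z _ _ hy hz =>
        rw [mul_add, add_mul, LinearMap.add_apply, LinearMap.add_apply, map_add, map_add,
          hy, hz]
    | smul r y _ hy =>
        rw [mul_smul_comm, smul_mul_assoc, LinearMap.smul_apply, LinearMap.smul_apply,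
          map_smul, map_smul, hy]
  induction ha' using Submodule.span_induction with
  | mem x hx => exact step1 x hx
  | zero => simp
  | add x y _ _ hx hy =>
      rw [add_mul, mul_add, LinearMap.add_apply, LinearMap.add_apply, map_add, map_add,
        hx, hy]
  | smul r x _ hx =>
      rw [smul_mul_assoc, mul_smul_comm, LinearMap.smul_apply, LinearMap.smul_apply,
        map_smul, map_smul, hx]
end

section
/- The map a ↦ c(aΩ) from the algebra A(D) generated by the compound Poisson operators p(d) into the cyclic Fock space over D is tracial: for all a, b ∈ A(D), c(abΩ) = c(baΩ). Equivalently, it suffices that c(d ⊗ d_1 ⊗ ··· ⊗ d_n + ψ(dd_1) d_2⊗···⊗d_n + dd_1 ⊗ d_2⊗···⊗d_n) = c(d_1⊗···⊗d_n⊗d + ψ(d_n d) d_1⊗···⊗d_{n-1} + d_1⊗···⊗d_{n-1}⊗ d_n d) for all d, d_1, ..., d_n ∈ D. -/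
/-- The creation operator `l(d)` on the algebraic full Fock space over the algebra
`D`, modelled as the tensor algebra. -/
noncomputable def creOpD {D : Type*} [Ring D] [Algebra ℂ D] (d : D) :
    Module.End ℂ (TensorAlgebra ℂ D) :=
  LinearMap.mulLeft ℂ (TensorAlgebra.ι ℂ d)

/-- The compound Poisson operator `p(d) = l(d) + l*(d*) + Λ(d) + ψ(d)1`. -/
noncomputable def poissonOp {D : Type*} [Ring D] [Algebra ℂ D] [StarRing D]
    (ψ : D →ₗ[ℂ] ℂ) (ann gauge : D → Module.End ℂ (TensorAlgebra ℂ D)) (d : D) :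
    Module.End ℂ (TensorAlgebra ℂ D) :=
  creOpD d + ann (star d) + gauge d + ψ d • (1 : Module.End ℂ (TensorAlgebra ℂ D))

namespace CyclicPoisson
variable {D : Type*} [Ring D] [Algebra ℂ D]

noncomputable def P (ds : List D) : TensorAlgebra ℂ D := (ds.map (TensorAlgebra.ι ℂ)).prod

lemma P_nil : P ([] : List D) = 1 := rfl
lemma P_cons (f : D) (t : List D) : P (f :: t) = TensorAlgebra.ι ℂ f * P t := by simp [P]
lemma P_append (s t : List D) : P (s ++ t) = P s * P t := by simp [P]
lemma P_single (f : D) : P [f] = TensorAlgebra.ι ℂ f := by simp [P]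

noncomputable def δmap : TensorAlgebra ℂ D →ₐ[ℂ] ℂ := TensorAlgebra.lift ℂ 0
lemma δ_ι_mul (e : D) (x : TensorAlgebra ℂ D) : δmap (TensorAlgebra.ι ℂ e * x) = 0 := by
  simp [map_mul, δmap]

noncomputable def corr (ψ : D →ₗ[ℂ] ℂ) (d e : D) : TensorAlgebra ℂ D :=
  ψ (e * d) • 1 + TensorAlgebra.ι ℂ (e * d)

lemma corr_add (ψ : D →ₗ[ℂ] ℂ) (d e f : D) : corr ψ d (e + f) = corr ψ d e + corr ψ d f := by
  simp only [corr, add_mul, map_add, add_smul]; abel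

lemma corr_smul (ψ : D →ₗ[ℂ] ℂ) (d : D) (a : ℂ) (e : D) :
    corr ψ d (a • e) = a • corr ψ d e := by
  simp only [corr, smul_mul_assoc, map_smul, smul_add, smul_assoc]

noncomputable def Mmap (ψ : D →ₗ[ℂ] ℂ) (d : D) :
    D →ₗ[ℂ] Module.End ℂ (TensorAlgebra ℂ D × TensorAlgebra ℂ D) where
  toFun e :=
    { toFun := fun p => (TensorAlgebra.ι ℂ e * p.1,
        TensorAlgebra.ι ℂ e * p.2 + δmap p.1 • corr ψ d e)
      map_add' := fun p q => by
        simp only [Prod.fst_add, Prod.snd_add, mul_add, map_add, add_smul, Prod.mk_add_mk,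
          Prod.mk.injEq]
        exact ⟨trivial, by abel⟩
      map_smul' := fun a p => by
        simp only [Prod.smul_fst, Prod.smul_snd, mul_smul_comm, map_smul, smul_assoc,
          RingHom.id_apply, Prod.smul_mk, smul_add, Prod.mk.injEq] }
  map_add' := fun e f => LinearMap.ext fun p => by
    simp only [LinearMap.coe_mk, AddHom.coe_mk, LinearMap.add_apply, map_add, add_mul,
      corr_add, smul_add, Prod.mk_add_mk, Prod.mk.injEq]
    exact ⟨trivial, by abel⟩
  map_smul' := fun a e => LinearMap.ext fun p => by
    simp only [LinearMap.coe_mk, AddHom.coe_mk, LinearMap.smul_apply, map_smul,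
      smul_mul_assoc, corr_smul, smul_add, RingHom.id_apply, Prod.smul_mk, Prod.mk.injEq]
    exact ⟨trivial, by rw [smul_comm]⟩

lemma Mmap_apply (ψ : D →ₗ[ℂ] ℂ) (d e : D) (p) :
    Mmap ψ d e p = (TensorAlgebra.ι ℂ e * p.1,
      TensorAlgebra.ι ℂ e * p.2 + δmap p.1 • corr ψ d e) := rfl


lemma Θ_fst (ψ : D →ₗ[ℂ] ℂ) (d : D) (x : TensorAlgebra ℂ D) :
    ∀ p : TensorAlgebra ℂ D × TensorAlgebra ℂ D,
      (TensorAlgebra.lift ℂ (Mmap ψ d) x p).1 = x * p.1 := by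
  induction x using TensorAlgebra.induction with
  | algebraMap r =>
    intro p
    simp [Algebra.smul_def, Module.algebraMap_end_apply]
  | ι e => intro p; rw [TensorAlgebra.lift_ι_apply]; rfl
  | mul a b ha hb =>
    intro p
    rw [map_mul, Module.End.mul_apply, ha, hb, mul_assoc]
  | add a b ha hb =>
    intro p
    rw [map_add, LinearMap.add_apply, Prod.fst_add, ha, hb, add_mul]

/-- The right Poisson operator. -/
noncomputable def Rop (ψ : D →ₗ[ℂ] ℂ) (d : D) : Module.End ℂ (TensorAlgebra ℂ D) where
  toFun x := (TensorAlgebra.lift ℂ (Mmap ψ d) x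
    (1, TensorAlgebra.ι ℂ d + ψ d • 1)).2
  map_add' x y := by simp only [map_add, LinearMap.add_apply, Prod.snd_add]
  map_smul' a x := by
    simp only [map_smul, LinearMap.smul_apply, Prod.smul_snd, RingHom.id_apply]

lemma Rop_one (ψ : D →ₗ[ℂ] ℂ) (d : D) :
    Rop ψ d 1 = TensorAlgebra.ι ℂ d + ψ d • 1 := by
  show (TensorAlgebra.lift ℂ (Mmap ψ d) 1 _).2 = _
  rw [map_one]; rfl

lemma Rop_ι_mul (ψ : D →ₗ[ℂ] ℂ) (d e : D) (x : TensorAlgebra ℂ D) :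
    Rop ψ d (TensorAlgebra.ι ℂ e * x) =
      TensorAlgebra.ι ℂ e * Rop ψ d x + δmap x • corr ψ d e := by
  show (TensorAlgebra.lift ℂ (Mmap ψ d) _ _).2 = _
  rw [map_mul, Module.End.mul_apply, TensorAlgebra.lift_ι_apply, Mmap_apply]
  have h1 := Θ_fst ψ d x (1, TensorAlgebra.ι ℂ d + ψ d • 1)
  simp only [h1, mul_one]
  rfl


lemma δ_P {l : List D} (h : l ≠ []) : δmap (P l) = 0 := by
  cases l with
  | nil => exact absurd rfl h
  | cons f t => rw [P_cons]; exact δ_ι_mul f (P t)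

lemma Rop_concat (ψ : D →ₗ[ℂ] ℂ) (d : D) (q : List D) (r : D) :
    Rop ψ d (P (q ++ [r])) = P (q ++ [r, d]) + ψ (r * d) • P q +
      P (q ++ [r * d]) + ψ d • P (q ++ [r]) := by
  induction q with
  | nil =>
    simp only [List.nil_append, P_single, P_nil]
    rw [← mul_one (TensorAlgebra.ι ℂ r), Rop_ι_mul, Rop_one]
    simp only [map_one, one_smul, corr, mul_one, P_cons, P_single, P_nil, mul_add,
      mul_smul_comm]
    abel
  | cons f q ih =>
    have hne : q ++ [r] ≠ [] := by simp
    rw [List.cons_append, P_cons, Rop_ι_mul, δ_P hne, zero_smul, add_zero, ih]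
    simp only [mul_add, mul_smul_comm, ← P_cons]
    rfl

lemma Rop_ne_nil (ψ : D →ₗ[ℂ] ℂ) (d : D) :
    ∀ (l : List D) (h : l ≠ []),
      Rop ψ d (P l) = P (l ++ [d]) + ψ (l.getLast h * d) • P l.dropLast +
        P (l.dropLast ++ [l.getLast h * d]) + ψ d • P l := by
  intro l h
  rcases l.eq_nil_or_concat' with rfl | ⟨q, r, rfl⟩
  · exact absurd rfl h
  · rw [Rop_concat]
    simp only [List.getLast_append_of_ne_nil (h₂ := List.cons_ne_nil r []), List.getLast_singleton,
      List.dropLast_concat]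
    congr 2
    rw [List.append_assoc]
    rfl


lemma keyA (ψ : D →ₗ[ℂ] ℂ) (hψtr : ∀ u v : D, ψ (u * v) = ψ (v * u))
    {V : Type*} [AddCommGroup V] [Module ℂ V]
    (cycD : List D → V)
    (hcycrot : ∀ (d : D) (ds : List D), cycD (ds ++ [d]) = cycD (d :: ds))
    (c : TensorAlgebra ℂ D →ₗ[ℂ] V)
    (hc0 : c 1 = 0)
    (hc1 : ∀ d, c (TensorAlgebra.ι ℂ d) = cycD [d])
    (hcrec : ∀ (d : D) (ds : List D) (hds : ds ≠ []),
      c (P (d :: ds)) = cycD (d :: ds) + cycD ((ds.getLast hds * d) :: ds.dropLast) +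
        ψ (d * ds.getLast hds) • c (P ds.dropLast))
    (d d₁ : D) (rest : List D) :
    c (P (d :: d₁ :: rest)) + ψ (d * d₁) • c (P rest) + c (P ((d * d₁) :: rest)) =
      c (P ((d₁ :: rest) ++ [d])) +
        ψ ((d₁ :: rest).getLast (List.cons_ne_nil d₁ rest) * d) •
          c (P ((d₁ :: rest).dropLast)) +
        c (P ((d₁ :: rest).dropLast ++
          [(d₁ :: rest).getLast (List.cons_ne_nil d₁ rest) * d])) := by
  rcases rest.eq_nil_or_concat' with rfl | ⟨q, r, rfl⟩
  · -- rest = []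
    have h1 : cycD [d₁, d] = cycD [d, d₁] := hcycrot d [d₁]
    have hl : ([d₁] : List D) ++ [d] = [d₁, d] := rfl
    simp only [List.getLast_singleton, List.dropLast_singleton, P_nil, hc0, smul_zero, add_zero,
      List.nil_append, hl]
    rw [hcrec d [d₁] (List.cons_ne_nil _ _), hcrec d₁ [d] (List.cons_ne_nil _ _)]
    simp only [List.getLast_singleton, List.dropLast_singleton, P_nil, hc0, smul_zero, add_zero,
      P_single, hc1, h1]
    abel
  · -- rest = q ++ [r]
    have hgl : ∀ (x : D) (hh : x :: (q ++ [r]) ≠ []), (x :: (q ++ [r])).getLast hh = r := by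
      intro x hh; simp
    have hdl : ∀ x : D, (x :: (q ++ [r])).dropLast = x :: q := by
      intro x
      rw [show x :: (q ++ [r]) = (x :: q) ++ [r] from rfl]
      exact List.dropLast_concat
    rw [hgl d₁, hdl d₁]
    rw [show (d₁ :: (q ++ [r])) ++ [d] = d₁ :: (q ++ [r] ++ [d]) from rfl]
    rw [show (d₁ :: q) ++ [r * d] = d₁ :: (q ++ [r * d]) from rfl]
    rw [hcrec d (d₁ :: (q ++ [r])) (List.cons_ne_nil _ _),
      hcrec (d * d₁) (q ++ [r]) (by simp),
      hcrec d₁ (q ++ [r] ++ [d]) (by simp),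
      hcrec d₁ (q ++ [r * d]) (by simp)]
    have g1 : ∀ hh, (q ++ [r]).getLast hh = r := fun hh => by simp
    have g2 : ∀ hh, (q ++ [r] ++ [d]).getLast hh = d := fun hh => by simp
    have g3 : ∀ hh, (q ++ [r * d]).getLast hh = r * d := fun hh => by simp
    simp only [g1, g2, g3, hgl, hdl, List.dropLast_concat]
    have e1 : cycD (d₁ :: (q ++ [r] ++ [d])) = cycD (d :: d₁ :: (q ++ [r])) := by
      rw [show d₁ :: (q ++ [r] ++ [d]) = (d₁ :: (q ++ [r])) ++ [d] from rfl]
      exact hcycrot d (d₁ :: (q ++ [r]))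
    have e2 : cycD (d₁ :: (q ++ [r * d])) = cycD ((r * d) :: d₁ :: q) := by
      rw [show d₁ :: (q ++ [r * d]) = (d₁ :: q) ++ [r * d] from rfl]
      exact hcycrot (r * d) (d₁ :: q)
    have e3 : ψ (d * r) = ψ (r * d) := hψtr d r
    have e4 : ψ (d * d₁) = ψ (d₁ * d) := hψtr d d₁
    have e5 : ψ (d * d₁ * r) = ψ (d₁ * (r * d)) := by
      rw [mul_assoc, hψtr d (d₁ * r), mul_assoc]
    have e6 : r * (d * d₁) = r * d * d₁ := by rw [mul_assoc]
    rw [e1, e2, e3, e4, e5, e6]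
    abel


lemma P_span (x : TensorAlgebra ℂ D) :
    x ∈ Submodule.span ℂ (Set.range (P : List D → TensorAlgebra ℂ D)) := by
  induction x using TensorAlgebra.induction with
  | algebraMap r =>
    have : (algebraMap ℂ (TensorAlgebra ℂ D)) r = r • P [] := by
      rw [P_nil, Algebra.smul_def, mul_one]
    rw [this]
    exact Submodule.smul_mem _ _ (Submodule.subset_span ⟨[], rfl⟩)
  | ι e =>
    exact Submodule.subset_span ⟨[e], P_single e⟩
  | add a b ha hb => exact Submodule.add_mem _ ha hb
  | mul a b ha hb =>
    have h : a * b ∈ Submodule.span ℂ (Set.range (P : List D → TensorAlgebra ℂ D)) *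
        Submodule.span ℂ (Set.range (P : List D → TensorAlgebra ℂ D)) :=
      Submodule.mul_mem_mul ha hb
    rw [Submodule.span_mul_span] at h
    refine Submodule.span_le.mpr ?_ h
    rintro z ⟨u, ⟨l₁, rfl⟩, v, ⟨l₂, rfl⟩, rfl⟩
    exact Submodule.subset_span ⟨l₁ ++ l₂, P_append l₁ l₂⟩

section Poisson
variable {Ds : Type*} [Ring Ds] [Algebra ℂ Ds] [StarRing Ds]
variable (ψ : Ds →ₗ[ℂ] ℂ) (ann gauge : Ds → Module.End ℂ (TensorAlgebra ℂ Ds))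

lemma pd_one (hann0 : ∀ d, ann d 1 = 0) (hgauge0 : ∀ d, gauge d 1 = 0) (d : Ds) :
    poissonOp ψ ann gauge d 1 = TensorAlgebra.ι ℂ d + ψ d • 1 := by
  simp only [poissonOp, creOpD, LinearMap.add_apply, LinearMap.smul_apply,
    Module.End.one_apply, hann0, hgauge0, LinearMap.mulLeft_apply, mul_one, add_zero]

lemma pd_ι_mul
    (hann : ∀ d e (x : TensorAlgebra ℂ Ds),
      ann d (TensorAlgebra.ι ℂ e * x) = ψ (star d * e) • x)
    (hgauge : ∀ d e (x : TensorAlgebra ℂ Ds),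
      gauge d (TensorAlgebra.ι ℂ e * x) = TensorAlgebra.ι ℂ (d * e) * x)
    (d e : Ds) (x : TensorAlgebra ℂ Ds) :
    poissonOp ψ ann gauge d (TensorAlgebra.ι ℂ e * x) =
      TensorAlgebra.ι ℂ d * (TensorAlgebra.ι ℂ e * x) + ψ (d * e) • x +
        TensorAlgebra.ι ℂ (d * e) * x + ψ d • (TensorAlgebra.ι ℂ e * x) := by
  simp only [poissonOp, creOpD, LinearMap.add_apply, LinearMap.smul_apply,
    Module.End.one_apply, hann, hgauge, star_star, LinearMap.mulLeft_apply]

lemma pd_ι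
    (hann : ∀ d e (x : TensorAlgebra ℂ Ds),
      ann d (TensorAlgebra.ι ℂ e * x) = ψ (star d * e) • x)
    (hgauge : ∀ d e (x : TensorAlgebra ℂ Ds),
      gauge d (TensorAlgebra.ι ℂ e * x) = TensorAlgebra.ι ℂ (d * e) * x)
    (d e : Ds) :
    poissonOp ψ ann gauge d (TensorAlgebra.ι ℂ e) =
      TensorAlgebra.ι ℂ d * TensorAlgebra.ι ℂ e + ψ (d * e) • 1 +
        TensorAlgebra.ι ℂ (d * e) + ψ d • TensorAlgebra.ι ℂ e := by
  have := pd_ι_mul ψ ann gauge hann hgauge d e 1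
  rw [mul_one] at this
  rw [this, mul_one]


variable (hann : ∀ d e (x : TensorAlgebra ℂ Ds),
      ann d (TensorAlgebra.ι ℂ e * x) = ψ (star d * e) • x)
    (hgauge : ∀ d e (x : TensorAlgebra ℂ Ds),
      gauge d (TensorAlgebra.ι ℂ e * x) = TensorAlgebra.ι ℂ (d * e) * x)
    (hann0 : ∀ d, ann d 1 = 0) (hgauge0 : ∀ d, gauge d 1 = 0)

lemma Rop_ι' (d e : Ds) :
    Rop ψ d (TensorAlgebra.ι ℂ e) = TensorAlgebra.ι ℂ e * TensorAlgebra.ι ℂ d +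
      ψ d • TensorAlgebra.ι ℂ e + ψ (e * d) • 1 + TensorAlgebra.ι ℂ (e * d) := by
  have h := Rop_ι_mul ψ d e 1
  simp only [mul_one, Rop_one, map_one, one_smul] at h
  rw [h, corr, mul_add, mul_smul_comm, mul_one]
  abel

include hann hgauge hann0 hgauge0

lemma comm_one (d e : Ds) :
    poissonOp ψ ann gauge e (Rop ψ d 1) = Rop ψ d (poissonOp ψ ann gauge e 1) := by
  rw [Rop_one, pd_one ψ ann gauge hann0 hgauge0, map_add, map_smul, map_add, map_smul,
    pd_ι ψ ann gauge hann hgauge, pd_one ψ ann gauge hann0 hgauge0, Rop_ι', Rop_one]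
  module

lemma comm_ι_mul (d e f : Ds) (y : TensorAlgebra ℂ Ds) :
    poissonOp ψ ann gauge e (Rop ψ d (TensorAlgebra.ι ℂ f * y)) =
      Rop ψ d (poissonOp ψ ann gauge e (TensorAlgebra.ι ℂ f * y)) := by
  simp only [Rop_ι_mul, pd_ι_mul ψ ann gauge hann hgauge, map_add, map_smul, corr,
    pd_one ψ ann gauge hann0 hgauge0, pd_ι ψ ann gauge hann hgauge, δ_ι_mul,
    zero_smul, add_zero]
  simp only [mul_add, add_mul, mul_smul_comm, smul_add, smul_smul, mul_assoc, mul_one, one_mul]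
  module

lemma comm_all (d e : Ds) (x : TensorAlgebra ℂ Ds) :
    poissonOp ψ ann gauge e (Rop ψ d x) = Rop ψ d (poissonOp ψ ann gauge e x) := by
  have hx := P_span x
  induction hx using Submodule.span_induction with
  | mem z hz =>
    obtain ⟨l, rfl⟩ := hz
    cases l with
    | nil => exact comm_one ψ ann gauge hann hgauge hann0 hgauge0 d e
    | cons f t =>
      rw [P_cons]
      exact comm_ι_mul ψ ann gauge hann hgauge hann0 hgauge0 d e f (P t)
  | zero => simp
  | add a b ha hb h1 h2 => simp only [map_add, h1, h2]
  | smul a z hz h => simp only [map_smul, h]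

lemma comm_End (d e : Ds) :
    poissonOp ψ ann gauge e * Rop ψ d = Rop ψ d * poissonOp ψ ann gauge e :=
  LinearMap.ext fun x => comm_all ψ ann gauge hann hgauge hann0 hgauge0 d e x

end Poisson

end CyclicPoisson

/-- the map `a ↦ c(aΩ)` from the algebra `A(D)` generated by the
compound Poisson operators `p(d)` into the cyclic Fock space over `D` is tracial,
and moreover
`c(d⊗d₁⊗⋯⊗dₙ + ψ(dd₁) d₂⊗⋯⊗dₙ + dd₁⊗d₂⊗⋯⊗dₙ)
  = c(d₁⊗⋯⊗dₙ⊗d + ψ(dₙd) d₁⊗⋯⊗d_{n-1} + d₁⊗⋯⊗d_{n-1}⊗dₙd)`. -/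
theorem cyclic_map_tracial_poisson {D : Type*} [Ring D] [Algebra ℂ D] [StarRing D]
    (ψ : D →ₗ[ℂ] ℂ) (hψtr : ∀ u v : D, ψ (u * v) = ψ (v * u)) (hψ1 : ψ 1 = 1)
    (ann gauge : D → Module.End ℂ (TensorAlgebra ℂ D))
    (hann0 : ∀ d, ann d 1 = 0)
    (hann : ∀ d e (x : TensorAlgebra ℂ D),
      ann d (TensorAlgebra.ι ℂ e * x) = ψ (star d * e) • x)
    (hgauge0 : ∀ d, gauge d 1 = 0)
    (hgauge : ∀ d e (x : TensorAlgebra ℂ D),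
      gauge d (TensorAlgebra.ι ℂ e * x) = TensorAlgebra.ι ℂ (d * e) * x)
    (hsep : ∀ T ∈ Algebra.adjoin ℂ (Set.range (poissonOp ψ ann gauge)),
      T 1 = 0 → T = 0)
    (V : Type*) [AddCommGroup V] [Module ℂ V]
    (cycD : List D → V)
    (hcycrot : ∀ (d : D) (ds : List D), cycD (ds ++ [d]) = cycD (d :: ds))
    (c : TensorAlgebra ℂ D →ₗ[ℂ] V)
    (hc0 : c 1 = 0)
    (hc1 : ∀ d, c (TensorAlgebra.ι ℂ d) = cycD [d])
    (hcrec : ∀ (d : D) (ds : List D) (hds : ds ≠ []),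
      c (((d :: ds).map (TensorAlgebra.ι ℂ)).prod) =
        cycD (d :: ds) + cycD ((ds.getLast hds * d) :: ds.dropLast) +
          ψ (d * ds.getLast hds) • c ((ds.dropLast.map (TensorAlgebra.ι ℂ)).prod)) :
    (∀ a ∈ Algebra.adjoin ℂ (Set.range (poissonOp ψ ann gauge)),
      ∀ b ∈ Algebra.adjoin ℂ (Set.range (poissonOp ψ ann gauge)),
        c ((a * b) 1) = c ((b * a) 1)) ∧
    (∀ (d d₁ : D) (rest : List D),
      c ((TensorAlgebra.ι ℂ d * ((d₁ :: rest).map (TensorAlgebra.ι ℂ)).prod) +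
          ψ (d * d₁) • ((rest.map (TensorAlgebra.ι ℂ)).prod) +
          TensorAlgebra.ι ℂ (d * d₁) * ((rest.map (TensorAlgebra.ι ℂ)).prod)) =
        c ((((d₁ :: rest) ++ [d]).map (TensorAlgebra.ι ℂ)).prod +
          ψ ((d₁ :: rest).getLast (List.cons_ne_nil d₁ rest) * d) •
            (((d₁ :: rest).dropLast.map (TensorAlgebra.ι ℂ)).prod) +
          (((d₁ :: rest).dropLast ++
            [(d₁ :: rest).getLast (List.cons_ne_nil d₁ rest) * d]).map
              (TensorAlgebra.ι ℂ)).prod)) := by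
  classical
  open CyclicPoisson in
  -- restate hcrec in terms of `P`
  have hcrecP : ∀ (d : D) (ds : List D) (hds : ds ≠ []),
      c (P (d :: ds)) = cycD (d :: ds) + cycD ((ds.getLast hds * d) :: ds.dropLast) +
        ψ (d * ds.getLast hds) • c (P ds.dropLast) := hcrec
  have hcR : ∀ (d : D) (x : TensorAlgebra ℂ D),
      c (poissonOp ψ ann gauge d x) = c (Rop ψ d x) := by
    intro d x
    refine Submodule.span_induction
      (p := fun z _ => c (poissonOp ψ ann gauge d z) = c (Rop ψ d z))
      ?_ ?_ ?_ ?_ (P_span x)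
    · rintro z ⟨l, rfl⟩
      cases l with
      | nil =>
        rw [show P ([] : List D) = 1 from rfl, pd_one ψ ann gauge hann0 hgauge0, Rop_one]
      | cons d₁ rest =>
        rw [Rop_ne_nil ψ d (d₁ :: rest) (List.cons_ne_nil d₁ rest), P_cons,
          pd_ι_mul ψ ann gauge hann hgauge, ← P_cons]
        simp only [map_add, map_smul]
        rw [show TensorAlgebra.ι ℂ d * P (d₁ :: rest) = P (d :: d₁ :: rest) from
          (P_cons d (d₁ :: rest)).symm,
          show TensorAlgebra.ι ℂ (d * d₁) * P rest = P ((d * d₁) :: rest) from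
          (P_cons (d * d₁) rest).symm]
        rw [keyA ψ hψtr cycD hcycrot c hc0 hc1 hcrecP d d₁ rest]
    · simp
    · intro u v _ _ h1 h2
      simp only [map_add, h1, h2]
    · intro a u _ h
      simp only [map_smul, h]
  have hRcomm : ∀ (d : D) (b : Module.End ℂ (TensorAlgebra ℂ D)),
      b ∈ Algebra.adjoin ℂ (Set.range (poissonOp ψ ann gauge)) →
      b * Rop ψ d = Rop ψ d * b := by
    intro d b hb
    induction hb using Algebra.adjoin_induction with
    | mem z hz =>
      obtain ⟨e, rfl⟩ := hz
      exact comm_End ψ ann gauge hann hgauge hann0 hgauge0 d e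
    | algebraMap r => exact (Algebra.commutes r (Rop ψ d))
    | add x y _ _ hx hy => rw [add_mul, mul_add, hx, hy]
    | mul x y _ _ hx hy => rw [mul_assoc, hy, ← mul_assoc, hx, mul_assoc]
  have K : ∀ (d : D), ∀ b ∈ Algebra.adjoin ℂ (Set.range (poissonOp ψ ann gauge)),
      c ((poissonOp ψ ann gauge d * b) 1) = c ((b * poissonOp ψ ann gauge d) 1) := by
    intro d b hb
    have h1 : Rop ψ d (b 1) = b (Rop ψ d 1) := by
      calc Rop ψ d (b 1) = (Rop ψ d * b) 1 := rfl
        _ = (b * Rop ψ d) 1 := by rw [hRcomm d b hb]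
        _ = b (Rop ψ d 1) := rfl
    calc c ((poissonOp ψ ann gauge d * b) 1)
        = c (poissonOp ψ ann gauge d (b 1)) := rfl
      _ = c (Rop ψ d (b 1)) := hcR d (b 1)
      _ = c (b (Rop ψ d 1)) := by rw [h1]
      _ = c (b (poissonOp ψ ann gauge d 1)) := by
          rw [Rop_one, ← pd_one ψ ann gauge hann0 hgauge0]
      _ = c ((b * poissonOp ψ ann gauge d) 1) := rfl
  constructor
  · intro a ha
    induction ha using Algebra.adjoin_induction with
    | mem z hz =>
      obtain ⟨e, rfl⟩ := hz
      exact K e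
    | algebraMap r =>
      intro b hb
      rw [Algebra.commutes r b]
    | add x y _ _ hx hy =>
      intro b hb
      rw [add_mul, mul_add, LinearMap.add_apply, LinearMap.add_apply, map_add, map_add,
        hx b hb, hy b hb]
    | mul x y hxA hyA hx hy =>
      intro b hb
      calc c ((x * y * b) 1) = c ((x * (y * b)) 1) := by rw [mul_assoc]
        _ = c (((y * b) * x) 1) := hx (y * b) (mul_mem hyA hb)
        _ = c ((y * (b * x)) 1) := by rw [mul_assoc]
        _ = c (((b * x) * y) 1) := hy (b * x) (mul_mem hb hxA)
        _ = c ((b * (x * y)) 1) := by rw [mul_assoc]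
  · intro d d₁ rest
    have hA := keyA ψ hψtr cycD hcycrot c hc0 hc1 hcrecP d d₁ rest
    show c (TensorAlgebra.ι ℂ d * P (d₁ :: rest) + ψ (d * d₁) • P rest +
        TensorAlgebra.ι ℂ (d * d₁) * P rest) =
      c (P ((d₁ :: rest) ++ [d]) +
        ψ ((d₁ :: rest).getLast (List.cons_ne_nil d₁ rest) * d) • P ((d₁ :: rest).dropLast) +
        P ((d₁ :: rest).dropLast ++ [(d₁ :: rest).getLast (List.cons_ne_nil d₁ rest) * d]))
    simp only [map_add, map_smul]
    rw [show TensorAlgebra.ι ℂ d * P (d₁ :: rest) = P (d :: d₁ :: rest) from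
      (P_cons d (d₁ :: rest)).symm,
      show TensorAlgebra.ι ℂ (d * d₁) * P rest = P ((d * d₁) :: rest) from
      (P_cons (d * d₁) rest).symm]
    exact hA
end

section
/- In a second order non-commutative probability space (A, φ, ρ) with subalgebras A_1,...,A_r free of second order, if (a_1,...,a_n) and (b_1,...,b_m) are cyclically alternating tuples and the subalgebra of a_1 occurs only once among all of a_1,...,a_n, b_1,...,b_m, then ρ(a_1···a_n, b_1···b_m) = φ(a_1)·ρ(a_2···a_n, b_1···b_m). Symmetrically, if the subalgebra of b_1 appears only once, ρ(a_1···a_n, b_1···b_m) = φ(b_1)·ρ(a_1···a_n, b_2···b_m). -/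
section SecondOrder

variable {A : Type*} [Ring A] [Algebra ℂ A] {ι : Type*}

/-- The product `a_0 a_1 ⋯ a_{n-1}`. -/
def cycProd (a : ℕ → A) (n : ℕ) : A := (List.ofFn (fun k : Fin n => a (k : ℕ))).prod

/-- A tuple `(a_0,…,a_{n-1})` with colours `i` is cyclically alternating if
cyclically adjacent elements come from different subalgebras. -/
def CycAlt (i : ℕ → ι) (n : ℕ) : Prop := 2 ≤ n → ∀ k < n, i k ≠ i ((k + 1) % n)

/-- Freeness (of first order) of a family of subalgebras with respect to `φ`. -/
def FirstOrderFree (φ : A →ₗ[ℂ] ℂ) (B : ι → Subalgebra ℂ A) : Prop :=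
  ∀ (n : ℕ) (idx : ℕ → ι) (a : ℕ → A), 1 ≤ n →
    (∀ k < n, a k ∈ B (idx k)) → (∀ k < n, φ (a k) = 0) →
    (∀ k, k + 1 < n → idx k ≠ idx (k + 1)) → φ (cycProd a n) = 0

/-- Second order freeness of the subalgebras `B i` with respect to `(φ, ρ)`:
freeness with respect to `φ` together with conditions (i), (ii), (iii) on centered
cyclically alternating tuples. -/
def SecondOrderFree (φ : A →ₗ[ℂ] ℂ) (ρ : A →ₗ[ℂ] A →ₗ[ℂ] ℂ)
    (B : ι → Subalgebra ℂ A) : Prop :=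
  FirstOrderFree φ B ∧
  -- (i)
  (∀ (n m : ℕ) (ia ib : ℕ → ι) (a b : ℕ → A), 1 ≤ n → 1 ≤ m → n ≠ m →
    (∀ k < n, a k ∈ B (ia k)) → (∀ l < m, b l ∈ B (ib l)) →
    (∀ k < n, φ (a k) = 0) → (∀ l < m, φ (b l) = 0) →
    CycAlt ia n → CycAlt ib m →
    ρ (cycProd a n) (cycProd b m) = 0) ∧
  -- (ii)
  (∀ (i j : ι), i ≠ j → ∀ a ∈ B i, ∀ b ∈ B j, φ a = 0 → φ b = 0 → ρ a b = 0) ∧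
  -- (iii)
  (∀ (n : ℕ) (ia ib : ℕ → ι) (a b : ℕ → A), 2 ≤ n →
    (∀ k < n, a k ∈ B (ia k)) → (∀ l < n, b l ∈ B (ib l)) →
    (∀ k < n, φ (a k) = 0) → (∀ l < n, φ (b l) = 0) →
    CycAlt ia n → CycAlt ib n →
    ρ (cycProd a n) (cycProd b n) =
      ∑ k ∈ Finset.range n, ∏ j ∈ Finset.range n, φ (a j * b ((k + (n - 1 - j)) % n)))

end SecondOrder

set_option linter.unusedSectionVars false
set_option linter.unnecessarySimpa false
set_option maxHeartbeats 1000000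

namespace SOFaux
variable {A : Type*} [Ring A] [Algebra ℂ A] {ι : Type*}


def lprod (L : List (ι × A)) : A := (L.map Prod.snd).prod

@[simp] lemma lprod_nil : lprod ([] : List (ι × A)) = 1 := rfl
@[simp] lemma lprod_cons (p : ι × A) (L : List (ι × A)) : lprod (p :: L) = p.2 * lprod L := by
  simp [lprod]
@[simp] lemma lprod_append (L M : List (ι × A)) : lprod (L ++ M) = lprod L * lprod M := by
  simp [lprod]

def AltC (L : List (ι × A)) : Prop := List.IsChain Ne (L.map Prod.fst)

def CAltC (L : List (ι × A)) : Prop :=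
  AltC L ∧ ∀ (h : L ≠ []), 2 ≤ L.length → (L.getLast h).1 ≠ (L.head h).1

open Classical in
noncomputable def unc (φ : A →ₗ[ℂ] ℂ) (L : List (ι × A)) : ℕ :=
  L.countP (fun p => decide (φ p.2 ≠ 0))

open Classical in
lemma unc_append (φ : A →ₗ[ℂ] ℂ) (L M : List (ι × A)) :
    unc φ (L ++ M) = unc φ L + unc φ M := List.countP_append

open Classical in
lemma unc_cons_eq_of_eq (φ : A →ₗ[ℂ] ℂ) {p : ι × A} (h : φ p.2 = 0) (L : List (ι × A)) :
    unc φ (p :: L) = unc φ L := by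
  simp [unc, List.countP_cons, h]

open Classical in
lemma unc_cons_eq_of_ne (φ : A →ₗ[ℂ] ℂ) {p : ι × A} (h : φ p.2 ≠ 0) (L : List (ι × A)) :
    unc φ (p :: L) = unc φ L + 1 := by
  simp [unc, List.countP_cons, h]

open Classical in
lemma unc_cons_le (φ : A →ₗ[ℂ] ℂ) (p : ι × A) (L : List (ι × A)) :
    unc φ (p :: L) ≤ unc φ L + 1 := by
  by_cases h : φ p.2 = 0
  · rw [unc_cons_eq_of_eq φ h]; omega
  · rw [unc_cons_eq_of_ne φ h]

open Classical in
lemma unc_le_cons (φ : A →ₗ[ℂ] ℂ) (p : ι × A) (L : List (ι × A)) :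
    unc φ L ≤ unc φ (p :: L) := by
  by_cases h : φ p.2 = 0
  · rw [unc_cons_eq_of_eq φ h]
  · rw [unc_cons_eq_of_ne φ h]; omega

open Classical in
lemma unc_sublist (φ : A →ₗ[ℂ] ℂ) {L M : List (ι × A)} (h : List.Sublist L M) :
    unc φ L ≤ unc φ M := List.Sublist.countP_le h


@[simp] lemma altC_nil : AltC ([] : List (ι × A)) := by simp [AltC]
@[simp] lemma altC_singleton (p : ι × A) : AltC [p] := by simp [AltC]
@[simp] lemma caltC_nil : CAltC ([] : List (ι × A)) := ⟨altC_nil, by simp⟩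
@[simp] lemma caltC_singleton (p : ι × A) : CAltC [p] := ⟨altC_singleton p, by simp⟩

lemma AltC.tail {p : ι × A} {L : List (ι × A)} (h : AltC (p :: L)) : AltC L := by
  have := List.IsChain.tail (l := (p :: L).map Prod.fst) h
  simpa [AltC] using this

lemma altC_append_left {L M : List (ι × A)} (h : AltC (L ++ M)) : AltC L := by
  unfold AltC at *
  rw [List.map_append, List.isChain_append] at h
  exact h.1

lemma altC_append_right {L M : List (ι × A)} (h : AltC (L ++ M)) : AltC M := by
  unfold AltC at *
  rw [List.map_append, List.isChain_append] at h
  exact h.2.1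

-- generic colour-list lemmas
lemma chain_drop {p q : List ι} {t : ι} (h : List.IsChain Ne (p ++ t :: q))
    (hb : ∀ a ∈ p.getLast?, ∀ b ∈ q.head?, a ≠ b) : List.IsChain Ne (p ++ q) := by
  rw [List.isChain_append] at h ⊢
  obtain ⟨h1, h2, h3⟩ := h
  exact ⟨h1, h2.tail, hb⟩

lemma chain_merge {p q : List ι} {x t y : ι} (hxy : x = y)
    (h : List.IsChain Ne (p ++ x :: t :: y :: q)) : List.IsChain Ne (p ++ x :: q) := by
  rw [List.isChain_append] at h ⊢
  obtain ⟨h1, h2, h3⟩ := h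
  refine ⟨h1, ?_, ?_⟩
  · rw [List.isChain_cons]
    have h4 : List.IsChain Ne (y :: q) := h2.tail.tail
    rw [List.isChain_cons] at h4
    exact ⟨fun b hb => hxy ▸ h4.1 b hb, h4.2⟩
  · intro a ha b hb
    simp only [List.head?_cons, Option.mem_def, Option.some.injEq] at hb
    subst hb
    exact h3 a ha x (by simp)

lemma altC_replace {P Q : List (ι × A)} {e : ι × A} (y : A) (h : AltC (P ++ e :: Q)) :
    AltC (P ++ (e.1, y) :: Q) := by
  unfold AltC at *
  simpa using (by simpa using h : List.IsChain Ne (P.map Prod.fst ++ e.1 :: Q.map Prod.fst))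

lemma altC_drop {P Q : List (ι × A)} {e : ι × A} (h : AltC (P ++ e :: Q))
    (hb : ∀ (hP : P ≠ []) (hQ : Q ≠ []), (P.getLast hP).1 ≠ (Q.head hQ).1) :
    AltC (P ++ Q) := by
  unfold AltC at *
  rw [List.map_append] at h ⊢
  simp only [List.map_cons] at h
  apply chain_drop h
  intro a ha b hb'
  rcases P with - | ⟨p0, P'⟩
  · simp at ha
  rcases Q with - | ⟨q0, Q'⟩
  · simp at hb'
  have hP : (p0 :: P') ≠ [] := by simp
  have hQ : (q0 :: Q') ≠ [] := by simp
  rw [List.getLast?_map, List.getLast?_eq_getLast hP] at ha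
  rw [List.head?_map] at hb'
  simp at ha hb'
  rw [← ha, ← hb']
  simpa using hb hP hQ

lemma altC_merge {P₀ Q₀ : List (ι × A)} {u v e : ι × A} (hcol : u.1 = v.1) (w : A)
    (h : AltC ((P₀ ++ [u]) ++ e :: v :: Q₀)) : AltC (P₀ ++ (u.1, w) :: Q₀) := by
  unfold AltC at *
  rw [List.map_append] at h ⊢
  simp only [List.map_append, List.map_cons, List.map_nil, List.append_assoc,
    List.cons_append, List.nil_append] at h ⊢
  exact chain_merge hcol (by simpa using h)

lemma caltC_cons_fresh {i : ι} {c : A} {L : List (ι × A)}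
    (hA : AltC L) (hf : ∀ p ∈ L, p.1 ≠ i) : CAltC ((i, c) :: L) := by
  constructor
  · unfold AltC at *
    rw [List.map_cons, List.isChain_cons]
    refine ⟨?_, hA⟩
    intro y hy
    rcases L with - | ⟨q, T⟩
    · simp at hy
    · rw [List.head?_map] at hy
      simp at hy
      rw [← hy]
      exact (hf q (by simp)) ∘ Eq.symm
  · intro h h2
    rcases L with - | ⟨q, T⟩
    · simp at h2
    · rw [List.getLast_cons (by simp), List.head_cons]
      exact hf ((q :: T).getLast (by simp)) (List.getLast_mem _)

lemma caltC_rot1 {x : ι × A} {T : List (ι × A)} (h : CAltC (x :: T)) : CAltC (T ++ [x]) := by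
  rcases T with - | ⟨q, T'⟩
  · simpa using h
  set T := q :: T' with hT
  have hTne : T ≠ [] := by simp [hT]
  obtain ⟨h1, h2⟩ := h
  constructor
  · unfold AltC at *
    rw [List.map_append, List.isChain_append]
    refine ⟨h1.tail, by simp, ?_⟩
    intro a ha b hb
    simp only [List.map_cons, List.map_nil, List.head?_cons, Option.mem_def,
      Option.some.injEq] at hb
    subst hb
    rw [List.getLast?_map, List.getLast?_eq_getLast hTne] at ha
    simp only [Option.map_some, Option.mem_def, Option.some.injEq] at ha
    rw [← ha]
    have := h2 (by simp) (by simp [hT])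
    rwa [List.getLast_cons hTne, List.head_cons] at this
  · intro hne h2'
    rw [List.getLast_concat, List.head_append (by simp [hT])]
    rw [dif_neg (by simp [hT] : ¬ (T.isEmpty = true))]
    unfold AltC at h1
    rw [List.map_cons, List.isChain_cons] at h1
    exact h1.1 (T.head hTne).1 (by rw [List.head?_map, List.head?_eq_head hTne]; simp)

lemma caltC_rotAll : ∀ (P T : List (ι × A)), CAltC (P ++ T) → CAltC (T ++ P)
  | [], T, h => by simpa using h
  | x :: P', T, h => by
      have h1 : CAltC ((P' ++ T) ++ [x]) := caltC_rot1 (by simpa using h)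
      have h2 := caltC_rotAll P' (T ++ [x]) (by simpa [List.append_assoc] using h1)
      simpa [List.append_assoc] using h2

lemma caltC_tail {e : ι × A} {R : List (ι × A)} (h : CAltC (e :: R))
    (hcyc : ∀ (hR : R ≠ []), 2 ≤ R.length → (R.getLast hR).1 ≠ (R.head hR).1) :
    CAltC R := ⟨h.1.tail, hcyc⟩

lemma caltC_head_replace {j : ι} {x y : A} {R : List (ι × A)}
    (h : CAltC ((j, x) :: R)) : CAltC ((j, y) :: R) := by
  obtain ⟨h1, h2⟩ := h
  constructor
  · unfold AltC at *
    simpa using (by simpa using h1 : List.IsChain Ne (j :: R.map Prod.fst))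
  · intro hne hlen
    rcases R with - | ⟨q, T⟩
    · simp at hlen
    · rw [List.getLast_cons (by simp), List.head_cons]
      have := h2 (by simp) (by simpa using hlen)
      rwa [List.getLast_cons (by simp), List.head_cons] at this

lemma caltC_merge {e z : ι × A} {S : List (ι × A)} (hS : S ≠ [])
    (h : CAltC (e :: z :: S)) (hcol : (S.getLast hS).1 = z.1) (w : A) :
    CAltC ((z.1, w) :: S.dropLast) := by
  obtain ⟨S₀, u, rfl⟩ : ∃ S₀ u, S = S₀ ++ [u] := by
    rcases List.eq_nil_or_concat S with h' | ⟨S₀, u, h'⟩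
    · exact absurd h' hS
    · exact ⟨S₀, u, by simpa [List.concat_eq_append] using h'⟩
  rw [List.getLast_concat] at hcol
  rw [List.dropLast_concat]
  obtain ⟨h1, h2⟩ := h
  constructor
  · unfold AltC at *
    have h1' : List.IsChain Ne ((z.1 :: S₀.map Prod.fst) ++ [u.1]) := by
      have h3 : AltC (z :: (S₀ ++ [u])) := h1.tail
      unfold AltC at h3
      simpa [List.map_append] using h3
    rw [List.isChain_append] at h1'
    simpa using h1'.1
  · intro hne hlen
    have hS₀ : S₀ ≠ [] := by
      rcases S₀ with - | ⟨s0, S₀'⟩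
      · simp at hlen
      · simp
    rw [List.getLast_cons hS₀, List.head_cons]
    have h1' : List.IsChain Ne ((z.1 :: S₀.map Prod.fst) ++ [u.1]) := by
      have h3 : AltC (z :: (S₀ ++ [u])) := h1.tail
      unfold AltC at h3
      simpa [List.map_append] using h3
    rw [List.isChain_append] at h1'
    have hb := h1'.2.2 ((S₀.getLast hS₀).1) ?_ u.1 (by simp)
    · exact hcol ▸ hb
    · rw [show z.1 :: S₀.map Prod.fst = (z :: S₀).map Prod.fst by simp,
        List.getLast?_map, List.getLast?_eq_getLast (by simp : z :: S₀ ≠ [])]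
      simp [List.getLast_cons hS₀]



noncomputable def idxF (j₀ : ι) (L : List (ι × A)) : ℕ → ι :=
  fun k => (L[k]?.map Prod.fst).getD j₀

noncomputable def elmF (L : List (ι × A)) : ℕ → A :=
  fun k => (L[k]?.map Prod.snd).getD 1

lemma idxF_lt (j₀ : ι) {L : List (ι × A)} {k : ℕ} (h : k < L.length) :
    idxF j₀ L k = (L[k]).1 := by
  simp [idxF, List.getElem?_eq_getElem h]

lemma elmF_lt {L : List (ι × A)} {k : ℕ} (h : k < L.length) :
    elmF L k = (L[k]).2 := by
  simp [elmF, List.getElem?_eq_getElem h]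

lemma cycProd_elmF (L : List (ι × A)) : cycProd (elmF L) L.length = lprod L := by
  unfold cycProd lprod
  congr 1
  apply List.ext_getElem
  · simp
  · intro k h1 h2
    simp only [List.getElem_ofFn, List.getElem_map]
    exact elmF_lt (by simpa using h2)

lemma altC_pairs {L : List (ι × A)} (h : AltC L) {k : ℕ} (hk : k + 1 < L.length) :
    (L[k]'(by omega)).1 ≠ (L[k+1]).1 := by
  unfold AltC at h
  rw [List.isChain_iff_getElem] at h
  have := h k (by simp only [List.length_map]; omega)
  simpa [List.get_eq_getElem, List.getElem_map] using this

lemma caltC_cycAlt (j₀ : ι) {L : List (ι × A)} (h : CAltC L) :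
    CycAlt (idxF j₀ L) L.length := by
  intro h2 k hk
  rcases Nat.lt_or_ge (k + 1) L.length with hlt | hge
  · rw [Nat.mod_eq_of_lt hlt, idxF_lt j₀ hk, idxF_lt j₀ hlt]
    exact altC_pairs h.1 hlt
  · have hk1 : k + 1 = L.length := by omega
    have hmod : (k + 1) % L.length = 0 := by rw [hk1, Nat.mod_self]
    rw [hmod, idxF_lt j₀ hk, idxF_lt j₀ (by omega)]
    have hne : L ≠ [] := by rintro rfl; simp at hk
    have h3 := h.2 hne h2
    rw [List.getLast_eq_getElem, List.head_eq_getElem] at h3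
    have h4 : L[L.length - 1]'(by omega) = L[k] := by congr 1; omega
    rwa [h4] at h3

theorem ZLbase (φ : A →ₗ[ℂ] ℂ) (ρ : A →ₗ[ℂ] A →ₗ[ℂ] ℂ)
    (hρ1 : ∀ x : A, ρ x 1 = 0)
    (B : ι → Subalgebra ℂ A) (hfree : SecondOrderFree φ ρ B)
    (i : ι) (c : A) (L M : List (ι × A))
    (hc : c ∈ B i) (hφc : φ c = 0)
    (hLB : ∀ p ∈ L, p.2 ∈ B p.1) (hMB : ∀ p ∈ M, p.2 ∈ B p.1)
    (hLA : AltC L) (hMA : CAltC M)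
    (hLf : ∀ p ∈ L, p.1 ≠ i) (hMf : ∀ p ∈ M, p.1 ≠ i)
    (hLc : ∀ p ∈ L, φ p.2 = 0) (hMc : ∀ p ∈ M, φ p.2 = 0) :
    ρ (c * lprod L) (lprod M) = 0 := by
  rcases eq_or_ne M [] with rfl | hMne
  · simp [hρ1]
  set cl : List (ι × A) := (i, c) :: L with hcl
  have hclA : CAltC cl := caltC_cons_fresh hLA hLf
  have hclB : ∀ p ∈ cl, p.2 ∈ B p.1 := by
    intro p hp; rcases List.mem_cons.mp hp with rfl | hp
    · exact hc
    · exact hLB p hp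
  have hclc : ∀ p ∈ cl, φ p.2 = 0 := by
    intro p hp; rcases List.mem_cons.mp hp with rfl | hp
    · exact hφc
    · exact hLc p hp
  set n := cl.length with hn
  set m := M.length with hm
  have hnL : n = L.length + 1 := by simp [hn, hcl]
  have hn1 : 1 ≤ n := by omega
  have hm1 : 1 ≤ m := by
    have : M.length ≠ 0 := by simpa [List.length_eq_zero_iff] using hMne
    omega
  have hXa : cycProd (elmF cl) n = c * lprod L := by
    rw [hn, cycProd_elmF]; simp [hcl]
  have hXb : cycProd (elmF M) m = lprod M := by rw [hm, cycProd_elmF]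
  have haB : ∀ k < n, elmF cl k ∈ B (idxF i cl k) := by
    intro k hk
    rw [elmF_lt hk, idxF_lt i hk]
    exact hclB _ (List.getElem_mem hk)
  have hbB : ∀ l < m, elmF M l ∈ B (idxF i M l) := by
    intro k hk
    rw [elmF_lt hk, idxF_lt i hk]
    exact hMB _ (List.getElem_mem hk)
  have hac : ∀ k < n, φ (elmF cl k) = 0 := by
    intro k hk; rw [elmF_lt hk]; exact hclc _ (List.getElem_mem hk)
  have hbc : ∀ l < m, φ (elmF M l) = 0 := by
    intro k hk; rw [elmF_lt hk]; exact hMc _ (List.getElem_mem hk)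
  have haAlt : CycAlt (idxF i cl) n := caltC_cycAlt i hclA
  have hbAlt : CycAlt (idxF i M) m := caltC_cycAlt i hMA
  rcases eq_or_ne n m with hnm | hnm
  · rcases eq_or_ne n 1 with h1 | h1
    · -- n = m = 1
      have hL0 : L = [] := by
        have : L.length = 0 := by omega
        simpa [List.length_eq_zero_iff] using this
      obtain ⟨d, rfl⟩ : ∃ d, M = [d] := List.length_eq_one_iff.mp (by omega)
      subst hL0
      have := hfree.2.2.1 i d.1 (Ne.symm (hMf d (by simp))) c hc d.2 (hMB d (by simp))
        hφc (hMc d (by simp))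
      simpa using this
    · -- n = m ≥ 2
      have h2n : 2 ≤ n := by omega
      have hbB' : ∀ l < n, elmF M l ∈ B (idxF i M l) := fun l hl => hbB l (hnm ▸ hl)
      have hbc' : ∀ l < n, φ (elmF M l) = 0 := fun l hl => hbc l (hnm ▸ hl)
      have hbAlt' : CycAlt (idxF i M) n := hnm ▸ hbAlt
      have hiii := hfree.2.2.2 n (idxF i cl) (idxF i M) (elmF cl) (elmF M) h2n
        haB hbB' hac hbc' haAlt hbAlt'
      have hXb' : cycProd (elmF M) n = lprod M := by rw [hnm]; exact hXb
      rw [← hXa, ← hXb', hiii]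
      apply Finset.sum_eq_zero
      intro k _
      apply Finset.prod_eq_zero (Finset.mem_range.mpr (show 0 < n by omega))
      have hs : (k + (n - 1 - 0)) % n < m := by
        rw [← hnm]; exact Nat.mod_lt _ (by omega)
      set s := (k + (n - 1 - 0)) % n with hsdef
      have he0 : elmF cl 0 = c := by
        rw [elmF_lt (show 0 < cl.length by rw [← hn]; omega)]; simp [hcl]
      have hfo := hfree.1 2 (fun t => if t = 0 then i else idxF i M s)
        (fun t => if t = 0 then c else elmF M s) (by omega) ?_ ?_ ?_
      · rw [he0]
        have hcp : cycProd (fun t : ℕ => if t = 0 then c else elmF M s) 2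
            = c * elmF M s := by
          simp [cycProd, List.ofFn_succ]
        rw [hcp] at hfo
        simpa using hfo
      · intro t ht
        interval_cases t
        · simpa using hc
        · simpa using hbB s hs
      · intro t ht
        interval_cases t
        · simpa using hφc
        · simpa using hbc s hs
      · intro t ht
        have ht0 : t = 0 := by omega
        subst ht0
        simp only [if_pos rfl, if_neg (by norm_num : (1:ℕ) ≠ 0)]
        rw [idxF_lt i hs]
        exact fun he => hMf _ (List.getElem_mem hs) he.symm
  · -- n ≠ m
    have := hfree.2.1 n m (idxF i cl) (idxF i M) (elmF cl) (elmF M) hn1 hm1 hnm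
      haB hbB hac hbc haAlt hbAlt
    rwa [hXa, hXb] at this

theorem ZLind (φ : A →ₗ[ℂ] ℂ) (ρ : A →ₗ[ℂ] A →ₗ[ℂ] ℂ)
    (hφ1 : φ 1 = 1)
    (hρtr2 : ∀ x y z : A, ρ x (y * z) = ρ x (z * y))
    (hρ1 : ∀ x : A, ρ x 1 = 0)
    (B : ι → Subalgebra ℂ A) (hfree : SecondOrderFree φ ρ B) :
    ∀ N : ℕ, ∀ (i : ι) (c : A) (L M : List (ι × A)),
      c ∈ B i → φ c = 0 →
      (∀ p ∈ L, p.2 ∈ B p.1) → (∀ p ∈ M, p.2 ∈ B p.1) →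
      AltC L → CAltC M →
      (∀ p ∈ L, p.1 ≠ i) → (∀ p ∈ M, p.1 ≠ i) →
      2 * (L.length + M.length) + unc φ L + unc φ M ≤ N →
      ρ (c * lprod L) (lprod M) = 0 := by
  intro N
  induction N with
  | zero =>
    intro i c L M hc hφc hLB hMB hLA hMA hLf hMf hN
    have hL0 : L = [] := by
      rcases L with - | _
      · rfl
      · simp [List.length_cons] at hN
    have hM0 : M = [] := by
      rcases M with - | _
      · rfl
      · simp [List.length_cons] at hN
    subst hL0; subst hM0
    exact ZLbase φ ρ hρ1 B hfree i c [] [] hc hφc (by simp) (by simp) altC_nil caltC_nil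
      (by simp) (by simp) (by simp) (by simp)
  | succ N ih =>
    intro i c L M hc hφc hLB hMB hLA hMA hLf hMf hN
    by_cases hLu : ∀ p ∈ L, φ p.2 = 0
    · by_cases hMu : ∀ p ∈ M, φ p.2 = 0
      · exact ZLbase φ ρ hρ1 B hfree i c L M hc hφc hLB hMB hLA hMA hLf hMf hLu hMu
      · -- center an element of M
        push_neg at hMu
        obtain ⟨e, heM, hφe⟩ := hMu
        obtain ⟨P, Q, rfl⟩ := List.append_of_mem heM
        have hmemR : ∀ p ∈ Q ++ P, p ∈ P ++ e :: Q := by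
          intro p hp
          rcases List.mem_append.mp hp with hp | hp
          · exact List.mem_append_right _ (List.mem_cons_of_mem _ hp)
          · exact List.mem_append_left _ hp
        have hrot : (ρ (c * lprod L)) (lprod (P ++ e :: Q))
            = (ρ (c * lprod L)) (e.2 * lprod (Q ++ P)) := by
          simp only [lprod_append, lprod_cons]
          rw [hρtr2, mul_assoc]
        have hMA' : CAltC (e :: (Q ++ P)) := by
          have := caltC_rotAll P (e :: Q) hMA
          simpa using this
        have hφec : φ (e.2 - φ e.2 • 1) = 0 := by
          simp [map_sub, map_smul, hφ1]
        have hsplit : (ρ (c * lprod L)) (e.2 * lprod (Q ++ P))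
            = (ρ (c * lprod L)) ((e.2 - φ e.2 • 1) * lprod (Q ++ P))
              + φ e.2 * (ρ (c * lprod L)) (lprod (Q ++ P)) := by
          conv_lhs => rw [show e.2 = (e.2 - φ e.2 • 1) + φ e.2 • 1 from
            (sub_add_cancel e.2 (φ e.2 • 1)).symm]
          rw [add_mul, smul_mul_assoc, one_mul, map_add, map_smul, smul_eq_mul]
        have huncM : unc φ (P ++ e :: Q) = unc φ P + (unc φ Q + 1) := by
          rw [unc_append, unc_cons_eq_of_ne φ hφe]
        have huncR : unc φ (Q ++ P) = unc φ Q + unc φ P := unc_append φ Q P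
        have hterm1 : (ρ (c * lprod L)) ((e.2 - φ e.2 • 1) * lprod (Q ++ P)) = 0 := by
          have hlp : (e.2 - φ e.2 • 1) * lprod (Q ++ P)
              = lprod ((e.1, e.2 - φ e.2 • 1) :: (Q ++ P)) := by simp
          rw [hlp]
          apply ih i c L ((e.1, e.2 - φ e.2 • 1) :: (Q ++ P)) hc hφc hLB ?_ hLA ?_ hLf ?_ ?_
          · intro p hp
            rcases List.mem_cons.mp hp with rfl | hp
            · exact sub_mem (hMB e heM) (Subalgebra.smul_mem _ (one_mem _) _)
            · exact hMB p (hmemR p hp)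
          · exact caltC_head_replace (j := e.1) (x := e.2) (y := e.2 - φ e.2 • 1)
              (by simpa using hMA')
          · intro p hp
            rcases List.mem_cons.mp hp with rfl | hp
            · exact hMf e heM
            · exact hMf p (hmemR p hp)
          · have h1 : unc φ ((e.1, e.2 - φ e.2 • 1) :: (Q ++ P)) = unc φ (Q ++ P) :=
              unc_cons_eq_of_eq φ hφec _
            simp only [List.length_cons, List.length_append] at hN ⊢
            omega
        have hterm2 : (ρ (c * lprod L)) (lprod (Q ++ P)) = 0 := by
          rcases hR : Q ++ P with - | ⟨z, S⟩
          · simp [hρ1]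
          · rw [hR] at hMA' hmemR huncR
            have hlenR : Q.length + P.length = S.length + 1 := by
              have := congrArg List.length hR
              simp at this
              omega
            rcases eq_or_ne S [] with rfl | hSne
            · -- singleton
              apply ih i c L [z] hc hφc hLB ?_ hLA (caltC_singleton z) hLf ?_ ?_
              · intro p hp
                rcases List.mem_cons.mp hp with rfl | hp
                · exact hMB p (hmemR p (by simp))
                · simp at hp
              · intro p hp
                rcases List.mem_cons.mp hp with rfl | hp
                · exact hMf p (hmemR p (by simp))
                · simp at hp
              · have h2 : unc φ [z] ≤ unc φ [] + 1 := unc_cons_le φ z []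
                have h3 : unc φ ([] : List (ι × A)) = 0 := rfl
                simp only [List.length_append, List.length_cons, List.length_nil] at hN ⊢
                omega
            · by_cases hclash : ((z :: S).getLast (by simp)).1 = z.1
              · -- merge last into head
                have hgl : ((z :: S).getLast (by simp)) = S.getLast hSne :=
                  List.getLast_cons hSne
                have hcol : (S.getLast hSne).1 = z.1 := by rw [← hgl]; exact hclash
                have hdl : S.dropLast ++ [S.getLast hSne] = S :=
                  List.dropLast_append_getLast hSne
                have hlpS : lprod S = lprod S.dropLast * (S.getLast hSne).2 := by
                  conv_lhs => rw [← hdl]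
                  simp
                have hlp : (ρ (c * lprod L)) (lprod (z :: S))
                    = (ρ (c * lprod L))
                        (lprod ((z.1, (S.getLast hSne).2 * z.2) :: S.dropLast)) := by
                  rw [lprod_cons, hlpS, ← mul_assoc, hρtr2, ← mul_assoc]
                  simp
                rw [hlp]
                apply ih i c L ((z.1, (S.getLast hSne).2 * z.2) :: S.dropLast) hc hφc hLB
                  ?_ hLA ?_ hLf ?_ ?_
                · intro p hp
                  rcases List.mem_cons.mp hp with rfl | hp
                  · apply mul_mem
                    · have := hMB _ (hmemR _ (List.mem_cons_of_mem _ (List.getLast_mem hSne)))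
                      rwa [hcol] at this
                    · exact hMB z (hmemR z (by simp))
                  · exact hMB p (hmemR p (List.mem_cons_of_mem _
                      ((List.dropLast_sublist S).subset hp)))
                · exact caltC_merge hSne hMA' hcol _
                · intro p hp
                  rcases List.mem_cons.mp hp with rfl | hp
                  · exact hMf z (hmemR z (by simp))
                  · exact hMf p (hmemR p (List.mem_cons_of_mem _
                      ((List.dropLast_sublist S).subset hp)))
                · have h1 : unc φ ((z.1, (S.getLast hSne).2 * z.2) :: S.dropLast)
                      ≤ unc φ S.dropLast + 1 := unc_cons_le φ _ _
                  have h2 : unc φ S.dropLast ≤ unc φ S := unc_sublist φ (List.dropLast_sublist S)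
                  have h3 : unc φ S ≤ unc φ (z :: S) := unc_le_cons φ z S
                  have h4 : S.dropLast.length = S.length - 1 := List.length_dropLast
                  simp only [List.length_append, List.length_cons] at hN ⊢
                  omega
              · -- no clash : just drop e
                apply ih i c L (z :: S) hc hφc hLB ?_ hLA ?_ hLf ?_ ?_
                · intro p hp
                  exact hMB p (hmemR p hp)
                · refine caltC_tail hMA' ?_
                  intro hR2 h2
                  simpa using hclash
                · intro p hp
                  exact hMf p (hmemR p hp)
                · have h3 : unc φ S ≤ unc φ (z :: S) := unc_le_cons φ z S
                  simp only [List.length_append, List.length_cons] at hN ⊢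
                  omega
        rw [hrot, hsplit, hterm1, hterm2]
        ring
    · -- center an element of L
      push_neg at hLu
      obtain ⟨e, heL, hφe⟩ := hLu
      obtain ⟨P, Q, rfl⟩ := List.append_of_mem heL
      have hPQ : ∀ p ∈ P ++ Q, p ∈ P ++ e :: Q := by
        intro p hp
        rcases List.mem_append.mp hp with hp | hp
        · exact List.mem_append_left _ hp
        · exact List.mem_append_right _ (List.mem_cons_of_mem _ hp)
      have hφec : φ (e.2 - φ e.2 • 1) = 0 := by
        simp [map_sub, map_smul, hφ1]
      have hsplit : c * lprod (P ++ e :: Q)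
          = c * lprod (P ++ (e.1, e.2 - φ e.2 • 1) :: Q) + φ e.2 • (c * lprod (P ++ Q)) := by
        simp only [lprod_append, lprod_cons]
        rw [(sub_add_cancel e.2 (φ e.2 • 1)).symm]
        simp only [add_mul, mul_add, smul_mul_assoc, one_mul, mul_smul_comm]
        rw [sub_add_cancel e.2 (φ e.2 • 1)]
      rw [hsplit, map_add, map_smul, LinearMap.add_apply, LinearMap.smul_apply, smul_eq_mul]
      have huncL : unc φ (P ++ e :: Q) = unc φ P + (unc φ Q + 1) := by
        rw [unc_append, unc_cons_eq_of_ne φ hφe]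
      have hterm1 : (ρ (c * lprod (P ++ (e.1, e.2 - φ e.2 • 1) :: Q))) (lprod M) = 0 := by
        apply ih i c (P ++ (e.1, e.2 - φ e.2 • 1) :: Q) M hc hφc ?_ hMB ?_ hMA ?_ hMf ?_
        · intro p hp
          rcases List.mem_append.mp hp with hp | hp
          · exact hLB p (List.mem_append_left _ hp)
          rcases List.mem_cons.mp hp with rfl | hp
          · exact sub_mem (hLB e heL) (Subalgebra.smul_mem _ (one_mem _) _)
          · exact hLB p (List.mem_append_right _ (List.mem_cons_of_mem _ hp))
        · exact altC_replace _ hLA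
        · intro p hp
          rcases List.mem_append.mp hp with hp | hp
          · exact hLf p (List.mem_append_left _ hp)
          rcases List.mem_cons.mp hp with rfl | hp
          · exact hLf e heL
          · exact hLf p (List.mem_append_right _ (List.mem_cons_of_mem _ hp))
        · have h1 : unc φ (P ++ (e.1, e.2 - φ e.2 • 1) :: Q) = unc φ P + unc φ Q := by
            rw [unc_append, unc_cons_eq_of_eq φ hφec]
          simp only [List.length_append, List.length_cons] at hN ⊢
          omega
      have hterm2 : (ρ (c * lprod (P ++ Q))) (lprod M) = 0 := by
        rcases Q with - | ⟨v, Q₀⟩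
        · -- Q = []
          rw [List.append_nil]
          apply ih i c P M hc hφc (fun p hp => hLB p (List.mem_append_left _ hp)) hMB
            (altC_append_left hLA) hMA (fun p hp => hLf p (List.mem_append_left _ hp)) hMf ?_
          have h1 : unc φ (P ++ [e]) = unc φ P + unc φ [e] := unc_append φ P [e]
          simp only [List.length_append, List.length_cons] at hN ⊢
          omega
        · rcases List.eq_nil_or_concat P with rfl | ⟨P₀, u, hP⟩
          · -- P = []
            rw [List.nil_append]
            simp only [List.nil_append] at hLA hLf hLB heL huncL hN
            apply ih i c (v :: Q₀) M hc hφc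
              (fun p hp => hLB p (List.mem_cons_of_mem _ hp)) hMB hLA.tail hMA
              (fun p hp => hLf p (List.mem_cons_of_mem _ hp)) hMf ?_
            have h3 : unc φ (v :: Q₀) ≤ unc φ (e :: v :: Q₀) := unc_le_cons φ e _
            simp only [List.length_cons] at hN ⊢
            omega
          · rw [List.concat_eq_append] at hP
            subst hP
            by_cases hcl : u.1 = v.1
            · -- merge u and v
              have hlp : lprod ((P₀ ++ [u]) ++ v :: Q₀)
                  = lprod (P₀ ++ (u.1, u.2 * v.2) :: Q₀) := by
                simp [mul_assoc]
              rw [hlp]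
              apply ih i c (P₀ ++ (u.1, u.2 * v.2) :: Q₀) M hc hφc ?_ hMB ?_ hMA ?_ hMf ?_
              · intro p hp
                rcases List.mem_append.mp hp with hp | hp
                · exact hLB p (List.mem_append_left _ (List.mem_append_left _ hp))
                rcases List.mem_cons.mp hp with rfl | hp
                · apply mul_mem (hLB u (List.mem_append_left _ (by simp)))
                  have := hLB v (List.mem_append_right _ (by simp))
                  rwa [← hcl] at this
                · exact hLB p (List.mem_append_right _ (by simp [hp]))
              · exact altC_merge hcl _ hLA
              · intro p hp
                rcases List.mem_append.mp hp with hp | hp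
                · exact hLf p (List.mem_append_left _ (List.mem_append_left _ hp))
                rcases List.mem_cons.mp hp with rfl | hp
                · exact hLf u (List.mem_append_left _ (by simp))
                · exact hLf p (List.mem_append_right _ (by simp [hp]))
              · have h1 : unc φ ((P₀ ++ [u]) ++ e :: v :: Q₀)
                    = unc φ P₀ + unc φ [u] + (unc φ (v :: Q₀) + 1) := by
                  rw [unc_append, unc_append, unc_cons_eq_of_ne φ hφe]
                have h2 : unc φ (P₀ ++ (u.1, u.2 * v.2) :: Q₀)
                    ≤ unc φ P₀ + (unc φ Q₀ + 1) := by
                  rw [unc_append]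
                  have := unc_cons_le φ (u.1, u.2 * v.2) Q₀
                  omega
                have h3 : unc φ Q₀ ≤ unc φ (v :: Q₀) := unc_le_cons φ v Q₀
                simp only [List.length_append, List.length_cons] at hN ⊢
                omega
            · -- no merge
              apply ih i c ((P₀ ++ [u]) ++ v :: Q₀) M hc hφc
                (fun p hp => hLB p (hPQ p hp)) hMB ?_ hMA
                (fun p hp => hLf p (hPQ p hp)) hMf ?_
              · apply altC_drop hLA
                intro hP hQ
                rw [List.getLast_concat]
                simpa using hcl
              · have h1 : unc φ ((P₀ ++ [u]) ++ v :: Q₀)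
                    = unc φ (P₀ ++ [u]) + unc φ (v :: Q₀) := unc_append φ _ _
                have h2 : unc φ ((P₀ ++ [u]) ++ e :: v :: Q₀)
                    = unc φ (P₀ ++ [u]) + (unc φ (v :: Q₀) + 1) := by
                  rw [unc_append, unc_cons_eq_of_ne φ hφe]
                simp only [List.length_append, List.length_cons] at hN ⊢
                omega
      rw [hterm1, hterm2]
      ring

lemma altC_of_pairs {L : List (ι × A)}
    (h : ∀ k (hk : k + 1 < L.length), (L[k]'(by omega)).1 ≠ (L[k+1]).1) : AltC L := by
  unfold AltC
  rw [List.isChain_iff_getElem]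
  intro k hk
  simp only [List.length_map] at hk
  simpa [List.get_eq_getElem, List.getElem_map] using h k (by omega)

lemma cycProd_succ (a : ℕ → A) (n : ℕ) :
    cycProd a (n + 1) = a 0 * cycProd (fun k => a (k + 1)) n := by
  unfold cycProd
  rw [List.ofFn_succ]
  simp [Fin.val_succ]

theorem partA (φ : A →ₗ[ℂ] ℂ) (ρ : A →ₗ[ℂ] A →ₗ[ℂ] ℂ)
    (hφ1 : φ 1 = 1)
    (hρtr2 : ∀ x y z : A, ρ x (y * z) = ρ x (z * y))
    (hρ1 : ∀ x : A, ρ x 1 = 0)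
    (B : ι → Subalgebra ℂ A) (hfree : SecondOrderFree φ ρ B)
    (n m : ℕ) (hn : 1 ≤ n) (hm : 1 ≤ m)
    (ia ib : ℕ → ι) (a b : ℕ → A)
    (ha : ∀ k < n, a k ∈ B (ia k)) (hb : ∀ l < m, b l ∈ B (ib l))
    (haAlt : CycAlt ia n) (hbAlt : CycAlt ib m)
    (h1 : ∀ k, 1 ≤ k → k < n → ia k ≠ ia 0) (h2 : ∀ l < m, ib l ≠ ia 0) :
    ρ (cycProd a n) (cycProd b m) =
      φ (a 0) * ρ (cycProd (fun k => a (k + 1)) (n - 1)) (cycProd b m) := by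
  obtain ⟨n', rfl⟩ : ∃ n', n = n' + 1 := ⟨n - 1, by omega⟩
  simp only [Nat.add_sub_cancel]
  set L : List (ι × A) := List.ofFn (fun k : Fin n' => (ia (k + 1 : ℕ), a (k + 1 : ℕ))) with hL
  set M : List (ι × A) := List.ofFn (fun l : Fin m => (ib (l : ℕ), b (l : ℕ))) with hM
  have hlenL : L.length = n' := by rw [hL]; simp
  have hlenM : M.length = m := by rw [hM]; simp
  have hlpL : lprod L = cycProd (fun k => a (k + 1)) n' := by
    rw [hL]; unfold lprod cycProd; rw [List.map_ofFn]; rfl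
  have hlpM : lprod M = cycProd b m := by
    rw [hM]; unfold lprod cycProd; rw [List.map_ofFn]; rfl
  have hsplit : cycProd a (n' + 1)
      = (a 0 - φ (a 0) • 1) * lprod L + φ (a 0) • lprod L := by
    rw [cycProd_succ, ← hlpL, sub_mul, smul_mul_assoc, one_mul, sub_add_cancel]
  rw [show cycProd b m = lprod M from hlpM.symm]
  rw [hsplit, map_add, map_smul, LinearMap.add_apply, LinearMap.smul_apply, smul_eq_mul]
  have hz : (ρ ((a 0 - φ (a 0) • 1) * lprod L)) (lprod M) = 0 := by
    apply ZLind φ ρ hφ1 hρtr2 hρ1 B hfree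
      (2 * (L.length + M.length) + unc φ L + unc φ M)
      (ia 0) _ L M ?_ ?_ ?_ ?_ ?_ ?_ ?_ ?_ le_rfl
    · exact sub_mem (ha 0 (by omega)) (Subalgebra.smul_mem _ (one_mem _) _)
    · simp [map_sub, map_smul, hφ1]
    · intro p hp
      rw [hL] at hp
      obtain ⟨k, hk⟩ := (List.mem_ofFn).mp hp
      rw [← hk]
      exact ha (k + 1) (by omega)
    · intro p hp
      rw [hM] at hp
      obtain ⟨l, hl⟩ := (List.mem_ofFn).mp hp
      rw [← hl]
      exact hb l l.2
    · apply altC_of_pairs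
      intro k hk
      rw [hlenL] at hk
      simp only [hL, List.getElem_ofFn]
      have := haAlt (by omega) (k + 1) (by omega)
      rwa [Nat.mod_eq_of_lt (by omega)] at this
    · constructor
      · apply altC_of_pairs
        intro l hl
        rw [hlenM] at hl
        simp only [hM, List.getElem_ofFn]
        have := hbAlt (by omega) l (by omega)
        rwa [Nat.mod_eq_of_lt (by omega)] at this
      · intro hne h2'
        rw [hlenM] at h2'
        rw [List.getLast_eq_getElem, List.head_eq_getElem]
        simp only [hM, List.getElem_ofFn, List.length_ofFn]
        have h3 := hbAlt h2' (m - 1) (by omega)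
        rwa [show (m - 1 + 1) % m = 0 by
          rw [Nat.sub_add_cancel hm, Nat.mod_self]] at h3
    · intro p hp
      rw [hL] at hp
      obtain ⟨k, hk⟩ := (List.mem_ofFn).mp hp
      rw [← hk]
      exact h1 (k + 1) (by omega) (by omega)
    · intro p hp
      rw [hM] at hp
      obtain ⟨l, hl⟩ := (List.mem_ofFn).mp hp
      rw [← hl]
      exact h2 l l.2
  rw [hz, hlpL]
  ring

theorem flip_free (φ : A →ₗ[ℂ] ℂ) (ρ : A →ₗ[ℂ] A →ₗ[ℂ] ℂ)
    (hφtr : ∀ x y : A, φ (x * y) = φ (y * x))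
    (B : ι → Subalgebra ℂ A) (h : SecondOrderFree φ ρ B) :
    SecondOrderFree φ ρ.flip B := by
  obtain ⟨h0, h1, h2, h3⟩ := h
  refine ⟨h0, ?_, ?_, ?_⟩
  · intro n m ia ib a b hn hm hnm haB hbB hac hbc haA hbA
    exact h1 m n ib ia b a hm hn (Ne.symm hnm) hbB haB hbc hac hbA haA
  · intro i j hij x hx y hy hφx hφy
    exact h2 j i (Ne.symm hij) y hy x hx hφy hφx
  · intro n ia ib a b hn haB hbB hac hbc haA hbA
    have key := h3 n ib ia b a hn hbB haB hbc hac hbA haA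
    rw [LinearMap.flip_apply, key]
    apply Finset.sum_congr rfl
    intro k hk
    rw [Finset.mem_range] at hk
    have hn0 : 0 < n := by omega
    have hσlt : ∀ j, j < n → (k + (n - 1 - j)) % n < n := fun j _ => Nat.mod_lt _ hn0
    have hσσ : ∀ j, j < n → (k + (n - 1 - (k + (n - 1 - j)) % n)) % n = j := by
      intro j hj
      set s := (k + (n - 1 - j)) % n with hs
      have hslt : s < n := Nat.mod_lt _ hn0
      have e2 : s + j ≡ k + (n - 1) [MOD n] := by
        have e1 : s ≡ k + (n - 1 - j) [MOD n] := Nat.mod_modEq _ _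
        have e1' := Nat.ModEq.add_right j e1
        rwa [show k + (n - 1 - j) + j = k + (n - 1) by omega] at e1'
      have e3 : k + (n - 1 - s) + s ≡ j + s [MOD n] := by
        rw [show k + (n - 1 - s) + s = k + (n - 1) by omega]
        have e2' := e2.symm
        rwa [show s + j = j + s by omega] at e2'
      have e4 : k + (n - 1 - s) ≡ j [MOD n] := Nat.ModEq.add_right_cancel' s e3
      have e5 : (k + (n - 1 - s)) % n = j % n := e4
      rwa [Nat.mod_eq_of_lt hj] at e5
    apply Finset.prod_nbij' (i := fun j => (k + (n - 1 - j)) % n)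
      (j := fun j => (k + (n - 1 - j)) % n)
    · intro j hj
      rw [Finset.mem_range] at *
      exact hσlt j hj
    · intro j hj
      rw [Finset.mem_range] at *
      exact hσlt j hj
    · intro j hj
      rw [Finset.mem_range] at hj
      exact hσσ j hj
    · intro j hj
      rw [Finset.mem_range] at hj
      exact hσσ j hj
    · intro j hj
      rw [Finset.mem_range] at hj
      rw [hσσ j hj, hφtr]

end SOFaux

/-- in a second order non-commutative probability space with
subalgebras free of second order, a subalgebra that occurs only once can be pulled
out of `ρ`:  `ρ(a_1⋯a_n, b_1⋯b_m) = φ(a_1) ρ(a_2⋯a_n, b_1⋯b_m)` when the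
subalgebra of `a_1` appears only once, and symmetrically for `b_1`. -/
theorem second_order_free_singleton_factor {A : Type*} [Ring A] [Algebra ℂ A] {ι : Type*}
    (φ : A →ₗ[ℂ] ℂ) (ρ : A →ₗ[ℂ] A →ₗ[ℂ] ℂ)
    (hφ1 : φ 1 = 1) (hφtr : ∀ x y : A, φ (x * y) = φ (y * x))
    (hρtr1 : ∀ x y z : A, ρ (x * y) z = ρ (y * x) z)
    (hρtr2 : ∀ x y z : A, ρ x (y * z) = ρ x (z * y))
    (hρ1 : ∀ x : A, ρ x 1 = 0) (hρ1' : ∀ x : A, ρ 1 x = 0)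
    (B : ι → Subalgebra ℂ A)
    (hfree : SecondOrderFree φ ρ B)
    (n m : ℕ) (hn : 1 ≤ n) (hm : 1 ≤ m)
    (ia ib : ℕ → ι) (a b : ℕ → A)
    (ha : ∀ k < n, a k ∈ B (ia k)) (hb : ∀ l < m, b l ∈ B (ib l))
    (haAlt : CycAlt ia n) (hbAlt : CycAlt ib m) :
    ((∀ k, 1 ≤ k → k < n → ia k ≠ ia 0) → (∀ l < m, ib l ≠ ia 0) →
      ρ (cycProd a n) (cycProd b m) =
        φ (a 0) * ρ (cycProd (fun k => a (k + 1)) (n - 1)) (cycProd b m)) ∧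
    ((∀ l, 1 ≤ l → l < m → ib l ≠ ib 0) → (∀ k < n, ia k ≠ ib 0) →
      ρ (cycProd a n) (cycProd b m) =
        φ (b 0) * ρ (cycProd a n) (cycProd (fun l => b (l + 1)) (m - 1))) := by
  constructor
  · intro hs1 hs2
    exact SOFaux.partA φ ρ hφ1 hρtr2 hρ1 B hfree n m hn hm ia ib a b ha hb haAlt hbAlt hs1 hs2
  · intro hs1 hs2
    have hff : SecondOrderFree φ ρ.flip B := SOFaux.flip_free φ ρ hφtr B hfree
    have hρtr2' : ∀ x y z : A, ρ.flip x (y * z) = ρ.flip x (z * y) := by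
      intro x y z
      simp only [LinearMap.flip_apply]
      exact hρtr1 y z x
    have hρ1f : ∀ x : A, ρ.flip x 1 = 0 := by
      intro x
      simp only [LinearMap.flip_apply]
      exact hρ1' x
    have key := SOFaux.partA φ ρ.flip hφ1 hρtr2' hρ1f B hff m n hm hn ib ia b a hb ha
      hbAlt haAlt hs1 hs2
    simpa only [LinearMap.flip_apply] using key
end
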